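/- arXiv:1308.1057 — 6 statements merged into one kernel-verified Lean document; each statement's English description precedes it below -/
import Mathlib

section
/- Let μ be a compactly supported probability measure on ℝ with Stieltjes transform m_μ, and let R > 0. There exist constants C₀, C₁ > 0 (depending only on R and the support of μ) such that the following holds. Suppose z, s, s' lie in the closed upper half-plane with |z| ≤ R, Im(s) ≥ 0, Im(z) + Im(s) ≥ η > 0, s = m_μ(z + s) + O(ε) and s' = m_μ(z + s') with Im(s') > 0, where 0 < ε ≤ 1. Then |s|, |s'| ≤ C₀ and |s' - s| ≤ C₁(ε^{1/3} + ε^{1/2}/η^{1/2}). -/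
open MeasureTheory

/-- The Stieltjes transform of a measure on ℝ. -/
noncomputable def stieltjes (μ : Measure ℝ) (z : ℂ) : ℂ := ∫ x, ((x : ℂ) - z)⁻¹ ∂μ

open Complex

lemma aux_sub_ne {w : ℂ} (hw : 0 < w.im) (x : ℝ) : (x : ℂ) - w ≠ 0 := by
  intro h
  rw [sub_eq_zero] at h
  have := congrArg Complex.im h
  simp at this
  linarith

lemma aux_norm_inv_le {w : ℂ} (hw : 0 < w.im) (x : ℝ) :
    ‖((x : ℂ) - w)⁻¹‖ ≤ w.im⁻¹ := by
  rw [norm_inv]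
  have h1 : w.im ≤ ‖(x : ℂ) - w‖ := by
    have := Complex.abs_im_le_norm ((x : ℂ) - w)
    simp only [Complex.sub_im, Complex.ofReal_im, zero_sub, abs_neg] at this
    calc w.im ≤ |w.im| := le_abs_self _
    _ ≤ _ := this
  exact inv_anti₀ hw h1

lemma aux_cont {w : ℂ} (hw : 0 < w.im) :
    Continuous (fun x : ℝ => ((x : ℂ) - w)⁻¹) :=
  (Complex.continuous_ofReal.sub continuous_const).inv₀ (fun x => aux_sub_ne hw x)

lemma aux_integrable_bound {E : Type*} [NormedAddCommGroup E] {μ : Measure ℝ}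
    [IsFiniteMeasure μ] {f : ℝ → E} (hm : AEStronglyMeasurable f μ) (C : ℝ)
    (h : ∀ x, ‖f x‖ ≤ C) : Integrable f μ :=
  (integrable_const C).mono' hm (ae_of_all _ h)

lemma aux_integrable_inv (μ : Measure ℝ) [IsFiniteMeasure μ] {w : ℂ} (hw : 0 < w.im) :
    Integrable (fun x : ℝ => ((x : ℂ) - w)⁻¹) μ :=
  aux_integrable_bound (aux_cont hw).aestronglyMeasurable w.im⁻¹ (aux_norm_inv_le hw)

lemma aux_ae_mem {μ : Measure ℝ} {a b : ℝ} (hsupp : μ (Set.Icc a b)ᶜ = 0) :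
    ∀ᵐ x ∂μ, x ∈ Set.Icc a b := by
  rw [ae_iff]
  exact hsupp

lemma stieltjes_abs_le (μ : Measure ℝ) [IsProbabilityMeasure μ] {a b : ℝ}
    (hsupp : μ (Set.Icc a b)ᶜ = 0) {w : ℂ} (hw : 0 < w.im) {r : ℝ} (hr : 0 < r)
    (h : ∀ x ∈ Set.Icc a b, r ≤ ‖(x : ℂ) - w‖) :
    ‖stieltjes μ w‖ ≤ r⁻¹ := by
  rw [stieltjes]
  have hb : ∀ᵐ (x : ℝ) ∂μ, ‖((x : ℂ) - w)⁻¹‖ ≤ r⁻¹ := by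
    filter_upwards [aux_ae_mem hsupp] with x hx
    rw [norm_inv]
    exact inv_anti₀ hr (by simpa using h x hx)
  have h2 := norm_integral_le_of_norm_le_const (μ := μ)
    (f := fun x : ℝ => ((x : ℂ) - w)⁻¹) hb
  simpa [measure_univ] using h2

lemma stieltjes_im (μ : Measure ℝ) [IsFiniteMeasure μ] {w : ℂ} (hw : 0 < w.im) :
    (stieltjes μ w).im = w.im * ∫ x, Complex.normSq (((x : ℂ) - w)⁻¹) ∂μ := by
  have him := integral_im (f := fun x : ℝ => ((x : ℂ) - w)⁻¹) (aux_integrable_inv μ hw)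
  simp only [RCLike.im_to_complex] at him
  rw [stieltjes, ← him, ← integral_const_mul]
  congr 1
  funext x
  rw [Complex.inv_im, Complex.normSq_inv]
  have hne : (x : ℂ) - w ≠ 0 := aux_sub_ne hw x
  have : ((x : ℂ) - w).im = -w.im := by simp
  rw [this]
  field_simp

lemma aux_cs (μ : Measure ℝ) [IsProbabilityMeasure μ] {u : ℝ → ℂ}
    (hm : AEStronglyMeasurable u μ) {C : ℝ} (hC : ∀ x, ‖u x‖ ≤ C) :
    Complex.normSq (∫ x, u x ∂μ) ≤ ∫ x, Complex.normSq (u x) ∂μ := by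
  set c := ∫ x, u x ∂μ with hc
  have hui : Integrable u μ := aux_integrable_bound hm C hC
  have hmsq : AEStronglyMeasurable (fun x => Complex.normSq (u x)) μ :=
    Complex.continuous_normSq.comp_aestronglyMeasurable hm
  have hsq : Integrable (fun x => Complex.normSq (u x)) μ := by
    refine aux_integrable_bound hmsq (C * C) (fun x => ?_)
    rw [Real.norm_of_nonneg (Complex.normSq_nonneg _), Complex.normSq_eq_norm_sq,
      sq]
    exact mul_le_mul (hC x) (hC x) (norm_nonneg _) (le_trans (norm_nonneg _) (hC x))
  have hint_re : Integrable (fun x => (u x * (starRingEnd ℂ) c).re) μ := by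
    simpa using (hui.mul_const ((starRingEnd ℂ) c)).re
  have hre : ∫ x, (u x * (starRingEnd ℂ) c).re ∂μ = Complex.normSq c := by
    have h := integral_re (f := fun x => u x * (starRingEnd ℂ) c) (hui.mul_const _)
    simp only [RCLike.re_to_complex] at h
    rw [h, integral_mul_const, ← hc, Complex.mul_conj, Complex.ofReal_re]
  have hnonneg : 0 ≤ ∫ x, Complex.normSq (u x - c) ∂μ :=
    integral_nonneg fun x => Complex.normSq_nonneg _
  have e1 : (fun x => Complex.normSq (u x - c)) = fun x =>
      Complex.normSq (u x) - (2 * (u x * (starRingEnd ℂ) c).re - Complex.normSq c) := by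
    funext x; rw [Complex.normSq_sub]; ring
  have hg : Integrable (fun x => 2 * (u x * (starRingEnd ℂ) c).re - Complex.normSq c) μ :=
    (hint_re.const_mul 2).sub (integrable_const _)
  have h2 : ∫ x, (2 * (u x * (starRingEnd ℂ) c).re - Complex.normSq c) ∂μ
      = Complex.normSq c := by
    have ha : ∫ x, 2 * (u x * (starRingEnd ℂ) c).re ∂μ = 2 * Complex.normSq c := by
      rw [integral_const_mul, hre]
    rw [integral_sub (hint_re.const_mul 2) (integrable_const _), ha, integral_const, probReal_univ]
    simp
    ring
  rw [e1, integral_sub hsq hg, h2] at hnonneg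
  linarith

lemma aux_sqrt_add {x y : ℝ} (hx : 0 ≤ x) (hy : 0 ≤ y) :
    Real.sqrt (x + y) ≤ Real.sqrt x + Real.sqrt y := by
  have h : x + y ≤ (Real.sqrt x + Real.sqrt y) ^ 2 := by
    nlinarith [Real.sq_sqrt hx, Real.sq_sqrt hy, Real.sqrt_nonneg x, Real.sqrt_nonneg y]
  calc Real.sqrt (x + y) ≤ Real.sqrt ((Real.sqrt x + Real.sqrt y) ^ 2) := Real.sqrt_le_sqrt h
  _ = Real.sqrt x + Real.sqrt y := Real.sqrt_sq (by positivity)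

set_option maxHeartbeats 1000000 in
theorem stability_lemma
    (μ : Measure ℝ) [IsProbabilityMeasure μ]
    (a b : ℝ) (hsupp : μ (Set.Icc a b)ᶜ = 0)
    (R : ℝ) (hR : 0 < R) :
    ∃ C₀ C₁ : ℝ, 0 < C₀ ∧ 0 < C₁ ∧
      ∀ (z s s' : ℂ) (η ε : ℝ),
        ‖z‖ ≤ R → 0 ≤ z.im → 0 ≤ s.im →
        0 < η → η ≤ z.im + s.im →
        0 < ε → ε ≤ 1 →
        ‖s - stieltjes μ (z + s)‖ ≤ ε →
        0 < s'.im → s' = stieltjes μ (z + s') →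
        ‖s‖ ≤ C₀ ∧ ‖s'‖ ≤ C₀ ∧
          ‖s' - s‖ ≤ C₁ * (ε ^ ((1 : ℝ) / 3) + ε ^ ((1 : ℝ) / 2) / η ^ ((1 : ℝ) / 2)) := by
  set M := max |a| |b| with hM
  have hM0 : 0 ≤ M := le_trans (abs_nonneg a) (le_max_left _ _)
  refine ⟨M + R + 3, 8, by positivity, by norm_num, ?_⟩
  intro z s s' η ε hzR hzim hsim hη hηle hε hε1 happ hs'im hs'eq
  set w : ℂ := z + s with hw
  set w' : ℂ := z + s' with hw'
  have hwim : 0 < w.im := by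
    rw [hw, Complex.add_im]; linarith
  have hw'im : 0 < w'.im := by
    rw [hw', Complex.add_im]; linarith
  have hxM : ∀ x ∈ Set.Icc a b, ‖(x : ℂ)‖ ≤ M := by
    intro x hx
    rw [Complex.norm_real, Real.norm_eq_abs]
    rcases hx with ⟨h1, h2⟩
    rw [abs_le]
    constructor
    · have : -|a| ≤ a := neg_abs_le a
      have : -M ≤ -|a| := neg_le_neg (le_max_left _ _)
      linarith [neg_abs_le a, le_max_left |a| |b|]
    · linarith [le_abs_self b, le_max_right |a| |b|]
  have key0 : ∀ (w0 : ℂ) (r : ℝ), 0 < w0.im → 0 < r →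
      ‖stieltjes μ w0‖ ≤ r⁻¹ ∨
        ∃ x ∈ Set.Icc a b, ‖(x : ℂ) - w0‖ < r := by
    intro w0 r h0 hr
    by_cases hcase : ∀ x ∈ Set.Icc a b, r ≤ ‖(x : ℂ) - w0‖
    · exact Or.inl (stieltjes_abs_le μ hsupp h0 hr hcase)
    · right; push_neg at hcase; exact hcase
  -- bound on |s|
  have hsC0 : ‖s‖ ≤ M + R + 3 := by
    rcases key0 w 2 hwim (by norm_num) with h | ⟨x, hx, hxl⟩
    · have h1 : ‖s‖ ≤ ‖s - stieltjes μ w‖ + ‖stieltjes μ w‖ := by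
        simpa using norm_add_le (s - stieltjes μ w) (stieltjes μ w)
      have : (2 : ℝ)⁻¹ ≤ 1 := by norm_num
      linarith
    · have h2 : ‖s‖ = ‖(w - (x:ℂ)) + ((x : ℂ) - z)‖ := by
        congr 1; rw [hw]; ring
      rw [h2]
      have h3 : ‖w - (x:ℂ)‖ < 2 := by
        rw [← norm_neg]; simpa [neg_sub] using hxl
      calc ‖(w - (x:ℂ)) + ((x : ℂ) - z)‖
          ≤ ‖w - (x:ℂ)‖ + ‖(x : ℂ) - z‖ := norm_add_le _ _
        _ ≤ ‖w - (x:ℂ)‖ + (‖(x:ℂ)‖ + ‖z‖) := by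
            linarith [norm_sub_le (x:ℂ) z]
        _ ≤ M + R + 3 := by linarith [hxM x hx]
  -- bound on |s'|
  have hs'C0 : ‖s'‖ ≤ M + R + 3 := by
    rcases key0 w' 1 hw'im (by norm_num) with h | ⟨x, hx, hxl⟩
    · rw [hs'eq]; calc ‖stieltjes μ w'‖ ≤ 1⁻¹ := h
        _ ≤ M + R + 3 := by
          have : (1:ℝ)⁻¹ = 1 := by norm_num
          rw [this]; linarith
    · have h2 : ‖s'‖ = ‖(w' - (x:ℂ)) + ((x : ℂ) - z)‖ := by
        congr 1; rw [hw']; ring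
      rw [h2]
      have h3 : ‖w' - (x:ℂ)‖ < 1 := by
        rw [← norm_neg]; simpa [neg_sub] using hxl
      calc ‖(w' - (x:ℂ)) + ((x : ℂ) - z)‖
          ≤ ‖w' - (x:ℂ)‖ + ‖(x : ℂ) - z‖ := norm_add_le _ _
        _ ≤ ‖w' - (x:ℂ)‖ + (‖(x:ℂ)‖ + ‖z‖) := by
            linarith [norm_sub_le (x:ℂ) z]
        _ ≤ M + R + 3 := by linarith [hxM x hx]
  refine ⟨hsC0, hs'C0, ?_⟩
  -- main estimate
  set f : ℝ → ℂ := fun x => ((x : ℂ) - w)⁻¹ with hf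
  set g : ℝ → ℂ := fun x => ((x : ℂ) - w')⁻¹ with hg
  have If : Integrable f μ := aux_integrable_inv μ hwim
  have Ig : Integrable g μ := aux_integrable_inv μ hw'im
  have hfg_cont : Continuous (fun x : ℝ => f x * g x) := (aux_cont hwim).mul (aux_cont hw'im)
  have Ifg : Integrable (fun x => f x * g x) μ := by
    refine aux_integrable_bound hfg_cont.aestronglyMeasurable (w.im⁻¹ * w'.im⁻¹) (fun x => ?_)
    rw [norm_mul]
    exact mul_le_mul (aux_norm_inv_le hwim x) (aux_norm_inv_le hw'im x) (norm_nonneg _)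
      (by positivity)
  set L : ℂ := ∫ x, f x * g x ∂μ with hL
  have hdiff : stieltjes μ w - stieltjes μ w' = (w - w') * L := by
    rw [hL, ← integral_const_mul]
    rw [stieltjes, stieltjes, ← integral_sub (aux_integrable_inv μ hwim) (aux_integrable_inv μ hw'im)]
    congr 1
    funext x
    have h1 : (x : ℂ) - w ≠ 0 := aux_sub_ne hwim x
    have h2 : (x : ℂ) - w' ≠ 0 := aux_sub_ne hw'im x
    rw [hf, hg]
    field_simp
    ring
  have hww' : w - w' = s - s' := by rw [hw, hw']; ring
  have hkey : (s - s') * (1 - L) = s - stieltjes μ w := by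
    have e1 : stieltjes μ w - s' = (s - s') * L := by
      rw [← hww', ← hdiff, hs'eq]
    calc (s - s') * (1 - L) = (s - s') - (s - s') * L := by ring
      _ = (s - s') - (stieltjes μ w - s') := by rw [← e1]
      _ = s - stieltjes μ w := by ring
  have habs : ‖s - s'‖ * ‖1 - L‖ ≤ ε := by
    rw [← norm_mul, hkey]; exact happ
  have hpow13 : (0:ℝ) < ε ^ ((1:ℝ)/3) := Real.rpow_pos_of_pos hε _
  have hpow12 : (0:ℝ) ≤ ε ^ ((1:ℝ)/2) / η ^ ((1:ℝ)/2) := by positivity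
  have habs_sub : ‖s' - s‖ = ‖s - s'‖ := by
    rw [← norm_neg]; congr 1; ring
  by_cases hLc : ε ^ ((2:ℝ)/3) ≤ ‖1 - L‖
  · -- easy case
    have hp : (0:ℝ) < ε ^ ((2:ℝ)/3) := Real.rpow_pos_of_pos hε _
    have h1 : ‖s - s'‖ ≤ ε / ε ^ ((2:ℝ)/3) := by
      rw [le_div_iff₀ hp]
      calc ‖s - s'‖ * ε ^ ((2:ℝ)/3)
          ≤ ‖s - s'‖ * ‖1 - L‖ := by
            exact mul_le_mul_of_nonneg_left hLc (norm_nonneg _)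
        _ ≤ ε := habs
    have h2 : ε / ε ^ ((2:ℝ)/3) = ε ^ ((1:ℝ)/3) := by
      rw [show ε / ε ^ ((2:ℝ)/3) = ε ^ (1:ℝ) / ε ^ ((2:ℝ)/3) by rw [Real.rpow_one],
        ← Real.rpow_sub hε]
      norm_num
    rw [habs_sub]
    calc ‖s - s'‖ ≤ ε ^ ((1:ℝ)/3) := by rw [← h2]; exact h1
      _ ≤ 8 * (ε ^ ((1:ℝ)/3) + ε ^ ((1:ℝ)/2) / η ^ ((1:ℝ)/2)) := by linarith
  · -- hard case
    push_neg at hLc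
    have hReL : 1 - ε ^ ((2:ℝ)/3) ≤ L.re := by
      have h1 : (1 - L).re ≤ ‖1 - L‖ :=
        (abs_le.1 (Complex.abs_re_le_norm _)).2
      have h2 : (1 - L).re = 1 - L.re := by simp
      linarith
    set A : ℝ := ∫ x, Complex.normSq (f x) ∂μ with hA
    set B : ℝ := ∫ x, Complex.normSq (g x) ∂μ with hB
    have himA : (stieltjes μ w).im = w.im * A := stieltjes_im μ hwim
    have himB : (stieltjes μ w').im = w'.im * B := stieltjes_im μ hw'im
    have hAle : A ≤ 1 + ε / η := by
      have hmim : (stieltjes μ w).im ≤ s.im + ε := by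
        have h1 : |(s - stieltjes μ w).im| ≤ ε :=
          le_trans (Complex.abs_im_le_norm _) happ
        have h2 : (s - stieltjes μ w).im = s.im - (stieltjes μ w).im := by simp
        rw [h2, abs_le] at h1
        linarith [h1.1]
      have hsw : s.im ≤ w.im := by rw [hw, Complex.add_im]; linarith
      have hηw : η ≤ w.im := by rw [hw, Complex.add_im]; linarith
      have h1 : A * w.im ≤ w.im + ε := by
        rw [mul_comm, ← himA]; linarith
      have h2 : w.im + ε ≤ (1 + ε / η) * w.im := by
        have h3 : ε / η * η ≤ ε / η * w.im :=
          mul_le_mul_of_nonneg_left hηw (by positivity)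
        rw [div_mul_cancel₀ _ (ne_of_gt hη)] at h3
        nlinarith
      exact le_of_mul_le_mul_right (h1.trans h2) hwim
    have hBle : B ≤ 1 := by
      have h1 : B * w'.im ≤ 1 * w'.im := by
        rw [mul_comm, ← himB, ← hs'eq, one_mul, hw', Complex.add_im]; linarith
      exact le_of_mul_le_mul_right h1 hw'im
    -- the function u
    set u : ℝ → ℂ := fun x => f x - (starRingEnd ℂ) (g x) with hu
    have hu_cont : Continuous u :=
      (aux_cont hwim).sub (Complex.continuous_conj.comp (aux_cont hw'im))
    have hu_bound : ∀ x, ‖u x‖ ≤ w.im⁻¹ + w'.im⁻¹ := by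
      intro x
      calc ‖u x‖ ≤ ‖f x‖ + ‖(starRingEnd ℂ) (g x)‖ := norm_sub_le _ _
        _ ≤ w.im⁻¹ + w'.im⁻¹ := by
            rw [RCLike.norm_conj]
            exact add_le_add (aux_norm_inv_le hwim x) (aux_norm_inv_le hw'im x)
    have Iconjg : Integrable (fun x => (starRingEnd ℂ) (g x)) μ := by
      refine aux_integrable_bound
        ((Complex.continuous_conj.comp (aux_cont hw'im)).aestronglyMeasurable) w'.im⁻¹
        (fun x => ?_)
      rw [RCLike.norm_conj]; exact aux_norm_inv_le hw'im x
    have Ire : Integrable (fun x => (f x * g x).re) μ := by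
      simpa using Ifg.re
    have IA : Integrable (fun x => Complex.normSq (f x)) μ := by
      refine aux_integrable_bound
        (Complex.continuous_normSq.comp_aestronglyMeasurable (aux_cont hwim).aestronglyMeasurable)
        (w.im⁻¹ * w.im⁻¹) (fun x => ?_)
      rw [Real.norm_of_nonneg (Complex.normSq_nonneg _), Complex.normSq_eq_norm_sq,
        sq]
      exact mul_le_mul (aux_norm_inv_le hwim x) (aux_norm_inv_le hwim x) (norm_nonneg _)
        (by positivity)
    have IB : Integrable (fun x => Complex.normSq (g x)) μ := by
      refine aux_integrable_bound
        (Complex.continuous_normSq.comp_aestronglyMeasurable (aux_cont hw'im).aestronglyMeasurable)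
        (w'.im⁻¹ * w'.im⁻¹) (fun x => ?_)
      rw [Real.norm_of_nonneg (Complex.normSq_nonneg _), Complex.normSq_eq_norm_sq,
        sq]
      exact mul_le_mul (aux_norm_inv_le hw'im x) (aux_norm_inv_le hw'im x) (norm_nonneg _)
        (by positivity)
    have hre2 : ∫ x, (f x * g x).re ∂μ = L.re := by
      have h := integral_re Ifg
      simp only [RCLike.re_to_complex] at h
      rw [← hL] at h
      exact h
    have hI2 : ∫ x, Complex.normSq (u x) ∂μ = A + B - 2 * L.re := by
      have e : (fun x => Complex.normSq (u x))
          = fun x => Complex.normSq (f x) + Complex.normSq (g x) - 2 * (f x * g x).re := by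
        funext x
        rw [hu]
        simp only
        rw [Complex.normSq_sub, Complex.normSq_conj, Complex.conj_conj]
      have Iadd : Integrable (fun x => Complex.normSq (f x) + Complex.normSq (g x)) μ :=
        IA.add IB
      have I2m : Integrable (fun x => 2 * (f x * g x).re) μ := Ire.const_mul 2
      rw [e, integral_sub Iadd I2m, integral_add IA IB, integral_const_mul, hre2]
    have hIu : ∫ x, u x ∂μ = stieltjes μ w - (starRingEnd ℂ) s' := by
      rw [hu]
      rw [integral_sub If Iconjg, integral_conj, hs'eq]
      rfl
    have hcs := aux_cs μ hu_cont.aestronglyMeasurable hu_bound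
    rw [hIu, hI2] at hcs
    have hnorm_le : Complex.normSq (stieltjes μ w - (starRingEnd ℂ) s')
        ≤ ε / η + 2 * ε ^ ((2:ℝ)/3) := by
      have : A + B - 2 * L.re ≤ (1 + ε/η) + 1 - 2 * (1 - ε ^ ((2:ℝ)/3)) := by
        linarith
      linarith [hcs]
    set κ : ℝ := Real.sqrt (ε / η + 2 * ε ^ ((2:ℝ)/3)) with hκ
    have habs1 : ‖stieltjes μ w - (starRingEnd ℂ) s'‖ ≤ κ := by
      rw [Complex.norm_def, hκ]
      exact Real.sqrt_le_sqrt hnorm_le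
    have habs2 : ‖s - (starRingEnd ℂ) s'‖ ≤ ε + κ := by
      calc ‖s - (starRingEnd ℂ) s'‖
          = ‖(s - stieltjes μ w) + (stieltjes μ w - (starRingEnd ℂ) s')‖ := by
            congr 1; ring
        _ ≤ ‖s - stieltjes μ w‖
            + ‖stieltjes μ w - (starRingEnd ℂ) s'‖ := norm_add_le _ _
        _ ≤ ε + κ := add_le_add happ habs1
    have him : s.im + s'.im ≤ ε + κ := by
      have h1 : (s - (starRingEnd ℂ) s').im = s.im + s'.im := by
        simp [Complex.sub_im, Complex.conj_im]
      have h2 : s.im + s'.im ≤ |(s - (starRingEnd ℂ) s').im| := by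
        rw [h1]; exact le_abs_self _
      linarith [le_trans (le_trans h2 (Complex.abs_im_le_norm _)) habs2]
    have hs'im_le : s'.im ≤ ε + κ := by linarith
    have hfinal : ‖s' - s‖ ≤ 3 * (ε + κ) := by
      have h1 : ‖s' - (starRingEnd ℂ) s'‖ = 2 * s'.im := by
        have : s' - (starRingEnd ℂ) s' = Complex.I * (2 * s'.im) := by
          apply Complex.ext <;> simp [Complex.conj_im, Complex.conj_re] <;> ring
        rw [this, norm_mul, Complex.norm_I, one_mul]
        rw [norm_mul]
        simp [Complex.norm_real, abs_of_pos hs'im]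
      have h2 : ‖(starRingEnd ℂ) s' - s‖ = ‖s - (starRingEnd ℂ) s'‖ := by
        rw [← norm_neg]; congr 1; ring
      calc ‖s' - s‖
          = ‖(s' - (starRingEnd ℂ) s') + ((starRingEnd ℂ) s' - s)‖ := by
            congr 1; ring
        _ ≤ ‖s' - (starRingEnd ℂ) s'‖ + ‖(starRingEnd ℂ) s' - s‖ :=
            norm_add_le _ _
        _ ≤ 2 * s'.im + (ε + κ) := by rw [h1, h2]; linarith
        _ ≤ 3 * (ε + κ) := by linarith
    -- bound κ
    have hκle : κ ≤ ε ^ ((1:ℝ)/2) / η ^ ((1:ℝ)/2) + Real.sqrt 2 * ε ^ ((1:ℝ)/3) := by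
      have h1 : κ ≤ Real.sqrt (ε / η) + Real.sqrt (2 * ε ^ ((2:ℝ)/3)) :=
        aux_sqrt_add (by positivity) (by positivity)
      have h2 : Real.sqrt (ε / η) = ε ^ ((1:ℝ)/2) / η ^ ((1:ℝ)/2) := by
        rw [Real.sqrt_div hε.le, Real.sqrt_eq_rpow, Real.sqrt_eq_rpow]
      have h3 : Real.sqrt (2 * ε ^ ((2:ℝ)/3)) = Real.sqrt 2 * ε ^ ((1:ℝ)/3) := by
        rw [Real.sqrt_mul (by norm_num : (0:ℝ) ≤ 2), Real.sqrt_eq_rpow (ε ^ ((2:ℝ)/3)),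
          ← Real.rpow_mul hε.le]
        norm_num
      rw [h2, h3] at h1
      exact h1
    have hsqrt2 : Real.sqrt 2 ≤ 1.5 := by
      rw [show (1.5:ℝ) = Real.sqrt (1.5 ^ 2) from (Real.sqrt_sq (by norm_num)).symm]
      exact Real.sqrt_le_sqrt (by norm_num)
    have hεle : ε ≤ ε ^ ((1:ℝ)/3) :=
      calc ε = ε ^ (1:ℝ) := (Real.rpow_one ε).symm
      _ ≤ ε ^ ((1:ℝ)/3) := Real.rpow_le_rpow_of_exponent_ge hε hε1 (by norm_num)
    calc ‖s' - s‖ ≤ 3 * (ε + κ) := hfinal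
      _ ≤ 3 * ε + 3 * (ε ^ ((1:ℝ)/2) / η ^ ((1:ℝ)/2) + Real.sqrt 2 * ε ^ ((1:ℝ)/3)) := by
          linarith
      _ ≤ 8 * (ε ^ ((1:ℝ)/3) + ε ^ ((1:ℝ)/2) / η ^ ((1:ℝ)/2)) := by
          have hm : Real.sqrt 2 * ε ^ ((1:ℝ)/3) ≤ 1.5 * ε ^ ((1:ℝ)/3) :=
            mul_le_mul_of_nonneg_right hsqrt2 hpow13.le
          linarith
end

section
/- Let μ be a compactly supported probability measure on ℝ with Stieltjes transform m_μ. Then there exists a unique holomorphic function s₀ from the upper half-plane to the upper half-plane satisfying s₀(z) = m_μ(z + s₀(z)) for all z with Im(z) > 0. -/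
open MeasureTheory Metric Filter Complex

section SC
variable {μ : Measure ℝ} [IsProbabilityMeasure μ]

lemma sub_ne_zero' {x : ℝ} {w : ℂ} (hw : 0 < w.im) : (x:ℂ) - w ≠ 0 := by
  intro h
  have : ((x:ℂ) - w).im = 0 := by rw [h]; simp
  simp [Complex.sub_im] at this
  linarith

lemma norm_inv_le' {x : ℝ} {w : ℂ} (hw : 0 < w.im) : ‖((x:ℂ) - w)⁻¹‖ ≤ w.im⁻¹ := by
  rw [norm_inv]
  have h1 : w.im ≤ ‖(x:ℂ) - w‖ := by
    have := Complex.abs_im_le_norm ((x:ℂ) - w)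
    simp only [Complex.sub_im, Complex.ofReal_im, zero_sub, abs_neg] at this
    calc w.im ≤ |w.im| := le_abs_self _
    _ ≤ ‖(x:ℂ) - w‖ := this
    _ = ‖(x:ℂ) - w‖ := rfl
  exact inv_anti₀ hw h1

lemma integrable_inv {w : ℂ} (hw : 0 < w.im) :
    Integrable (fun x : ℝ => ((x:ℂ) - w)⁻¹) μ := by
  apply (integrable_const (w.im⁻¹ : ℝ)).mono'
  · exact Continuous.aestronglyMeasurable
      (((Complex.continuous_ofReal.sub continuous_const).inv₀
        (fun x => sub_ne_zero' hw)))
  · exact Filter.Eventually.of_forall fun x => norm_inv_le' hw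

lemma integrable_invsq {w : ℂ} (hw : 0 < w.im) :
    Integrable (fun x : ℝ => ‖((x:ℂ) - w)⁻¹‖^2) μ := by
  apply (integrable_const ((w.im⁻¹)^2 : ℝ)).mono'
  · exact Continuous.aestronglyMeasurable
      ((((Complex.continuous_ofReal.sub continuous_const).inv₀
        (fun x => sub_ne_zero' hw)).norm.pow 2))
  · refine Filter.Eventually.of_forall fun x => ?_
    simp only [Real.norm_eq_abs, _root_.abs_pow, abs_norm]
    exact pow_le_pow_left₀ (norm_nonneg _) (norm_inv_le' hw) 2

noncomputable def Jint (μ : Measure ℝ) (w : ℂ) : ℝ := ∫ x, ‖((x:ℂ) - w)⁻¹‖^2 ∂μ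

lemma im_inv_eq {x : ℝ} {w : ℂ} :
    (((x:ℂ) - w)⁻¹).im = w.im * ‖((x:ℂ) - w)⁻¹‖^2 := by
  rw [Complex.inv_im, show ‖((x:ℂ)-w)⁻¹‖^2 = (Complex.normSq ((x:ℂ)-w))⁻¹ by
    rw [norm_inv, ← Complex.sq_norm, inv_pow]]
  simp [Complex.sub_im, div_eq_mul_inv]

lemma im_stieltjes {w : ℂ} (hw : 0 < w.im) :
    (stieltjes μ w).im = w.im * Jint μ w := by
  have h0 : (stieltjes μ w).im = ∫ x, (((x:ℂ) - w)⁻¹).im ∂μ :=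
    (Complex.imCLM.integral_comp_comm (integrable_inv hw)).symm
  rw [h0, Jint, ← integral_const_mul]
  exact integral_congr_ae (Filter.Eventually.of_forall fun _ => im_inv_eq)

lemma jint_nonneg (μ : Measure ℝ) (w : ℂ) : 0 ≤ Jint μ w :=
  integral_nonneg fun x => sq_nonneg _

lemma norm_stieltjes_le {w : ℂ} (hw : 0 < w.im) : ‖stieltjes μ w‖ ≤ w.im⁻¹ := by
  rw [stieltjes]
  calc ‖∫ x, ((x:ℂ) - w)⁻¹ ∂μ‖ ≤ ∫ x, (w.im⁻¹ : ℝ) ∂μ :=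
        norm_integral_le_of_norm_le (integrable_const _)
          (Filter.Eventually.of_forall fun x => norm_inv_le' hw)
    _ = w.im⁻¹ := by simp

lemma key_diff_bound {w₁ w₂ : ℂ} (h1 : 0 < w₁.im) (h2 : 0 < w₂.im) :
    ‖stieltjes μ w₁ - stieltjes μ w₂‖ ≤ ‖w₁ - w₂‖ * ((Jint μ w₁ + Jint μ w₂)/2) := by
  have hsub : stieltjes μ w₁ - stieltjes μ w₂
      = ∫ x, (((x:ℂ) - w₁)⁻¹ - ((x:ℂ) - w₂)⁻¹) ∂μ :=
    (integral_sub (integrable_inv h1) (integrable_inv h2)).symm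
  rw [hsub]
  have hint : Integrable (fun x : ℝ =>
      ‖w₁ - w₂‖ * ((‖((x:ℂ) - w₁)⁻¹‖^2 + ‖((x:ℂ) - w₂)⁻¹‖^2)/2)) μ :=
    (((integrable_invsq h1).add (integrable_invsq h2)).div_const 2).const_mul _
  calc ‖∫ x, (((x:ℂ) - w₁)⁻¹ - ((x:ℂ) - w₂)⁻¹) ∂μ‖
      ≤ ∫ x, ‖w₁ - w₂‖ * ((‖((x:ℂ) - w₁)⁻¹‖^2 + ‖((x:ℂ) - w₂)⁻¹‖^2)/2) ∂μ := by
        refine norm_integral_le_of_norm_le hint (Filter.Eventually.of_forall fun x => ?_)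
        have hu : (x:ℂ) - w₁ ≠ 0 := sub_ne_zero' h1
        have hv : (x:ℂ) - w₂ ≠ 0 := sub_ne_zero' h2
        have hid : ((x:ℂ) - w₁)⁻¹ - ((x:ℂ) - w₂)⁻¹
            = (w₁ - w₂) * (((x:ℂ) - w₁)⁻¹ * ((x:ℂ) - w₂)⁻¹) := by
          field_simp
          ring
        rw [hid, norm_mul, norm_mul]
        apply mul_le_mul_of_nonneg_left _ (norm_nonneg _)
        nlinarith [norm_nonneg (((x:ℂ) - w₁)⁻¹), norm_nonneg (((x:ℂ) - w₂)⁻¹),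
          sq_nonneg (‖((x:ℂ) - w₁)⁻¹‖ - ‖((x:ℂ) - w₂)⁻¹‖)]
    _ = ‖w₁ - w₂‖ * ((Jint μ w₁ + Jint μ w₂)/2) := by
        rw [integral_const_mul]
        congr 1
        rw [integral_div, integral_add (integrable_invsq h1) (integrable_invsq h2)]
        rfl

lemma meas_inv (w : ℂ) : AEStronglyMeasurable (fun x : ℝ => ((x:ℂ) - w)⁻¹) μ :=
  ((Complex.measurable_ofReal.sub_const w).inv).aestronglyMeasurable

lemma hasDerivAt_stieltjes {w₀ : ℂ} (hw : 0 < w₀.im) :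
    HasDerivAt (stieltjes μ) (∫ x, (((x:ℂ) - w₀)⁻¹)^2 ∂μ) w₀ := by
  have hε : (0:ℝ) < w₀.im/2 := by linarith
  have him : ∀ w ∈ ball w₀ (w₀.im/2), w₀.im/2 ≤ w.im := by
    intro w hwball
    have h1 : |(w - w₀).im| ≤ ‖w - w₀‖ := Complex.abs_im_le_norm _
    rw [mem_ball, dist_eq_norm] at hwball
    have := abs_le.1 h1
    simp only [Complex.sub_im] at this
    linarith [this.1, hwball]
  have key := hasDerivAt_integral_of_dominated_loc_of_deriv_le
    (F := fun w (x:ℝ) => ((x:ℂ) - w)⁻¹) (F' := fun w (x:ℝ) => (((x:ℂ) - w)⁻¹)^2)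
    (x₀ := w₀) (bound := fun _ => ((w₀.im/2)⁻¹)^2) (ball_mem_nhds w₀ hε)
    (Filter.Eventually.of_forall fun w => meas_inv w)
    (integrable_inv hw)
    (((Complex.measurable_ofReal.sub_const w₀).inv.pow_const 2).aestronglyMeasurable)
    (Filter.Eventually.of_forall fun x => by
      intro w hwball
      have h2 : 0 < w.im := lt_of_lt_of_le hε (him w hwball)
      have h3 : ‖((x:ℂ) - w)⁻¹‖ ≤ (w₀.im/2)⁻¹ :=
        le_trans (norm_inv_le' h2) (by
          exact inv_anti₀ hε (him w hwball))
      calc ‖(((x:ℂ) - w)⁻¹)^2‖ = ‖((x:ℂ) - w)⁻¹‖^2 := by rw [norm_pow]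
        _ ≤ ((w₀.im/2)⁻¹)^2 := pow_le_pow_left₀ (norm_nonneg _) h3 2)
    (integrable_const (μ := μ) _)
    (Filter.Eventually.of_forall fun x => by
      intro w hwball
      have h2 : 0 < w.im := lt_of_lt_of_le hε (him w hwball)
      have hne : (x:ℂ) - w ≠ 0 := sub_ne_zero' h2
      have hd : HasDerivAt (fun w : ℂ => (x:ℂ) - w) (-1) w :=
        (hasDerivAt_id w).const_sub (x:ℂ)
      have := hd.inv hne
      convert this using 1
      case e'_4 => rfl
      case e'_8 => rfl
      case e'_9 => rw [neg_neg, one_div, inv_pow])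
  exact key.2

lemma diffAt_stieltjes {w : ℂ} (hw : 0 < w.im) :
    DifferentiableAt ℂ (stieltjes μ) w :=
  (hasDerivAt_stieltjes hw).differentiableAt

lemma contAt_stieltjes {w : ℂ} (hw : 0 < w.im) :
    ContinuousAt (stieltjes μ) w := (diffAt_stieltjes hw).continuousAt

lemma contAt_jint {w : ℂ} (hw : 0 < w.im) : ContinuousAt (Jint μ) w := by
  have heq : ∀ᶠ w' in nhds w, Jint μ w' = (stieltjes μ w').im / w'.im := by
    have : ∀ᶠ w' in nhds w, 0 < w'.im :=
      continuousAt_const.eventually_lt Complex.continuous_im.continuousAt hw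
    filter_upwards [this] with w' hw'
    rw [im_stieltjes hw']
    exact (mul_div_cancel_left₀ _ (ne_of_gt hw')).symm
  apply ContinuousAt.congr _ (heq.mono fun w' h => h.symm)
  exact ((Complex.continuous_im.continuousAt.comp (contAt_stieltjes hw)).div
    Complex.continuous_im.continuousAt (ne_of_gt hw))

lemma jint_fixed {z s : ℂ} (hz : 0 < z.im) (hs : 0 < s.im)
    (hfix : s = stieltjes μ (z + s)) :
    Jint μ (z + s) = s.im / (z.im + s.im) ∧ Jint μ (z + s) < 1 := by
  have him : (z + s).im = z.im + s.im := Complex.add_im z s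
  have h0 : 0 < (z + s).im := by rw [him]; linarith
  have h1 : s.im = (z.im + s.im) * Jint μ (z + s) := by
    conv_lhs => rw [hfix]
    rw [im_stieltjes h0, him]
  constructor
  · have hne : z.im + s.im ≠ 0 := ne_of_gt (by linarith)
    rw [eq_div_iff hne]
    linear_combination -h1
  · by_contra hcon
    push_neg at hcon
    nlinarith [jint_nonneg μ (z + s)]

lemma fixed_unique {z s t : ℂ} (hz : 0 < z.im) (hs : 0 < s.im) (ht : 0 < t.im)
    (hfs : s = stieltjes μ (z + s)) (hft : t = stieltjes μ (z + t)) : s = t := by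
  have h1 : 0 < (z + s).im := by rw [Complex.add_im]; linarith
  have h2 : 0 < (z + t).im := by rw [Complex.add_im]; linarith
  have hJs := (jint_fixed hz hs hfs).2
  have hJt := (jint_fixed hz ht hft).2
  have hkey : ‖s - t‖ ≤ ‖s - t‖ * ((Jint μ (z+s) + Jint μ (z+t))/2) := by
    calc ‖s - t‖ = ‖stieltjes μ (z+s) - stieltjes μ (z+t)‖ := by rw [← hfs, ← hft]
      _ ≤ ‖(z+s) - (z+t)‖ * ((Jint μ (z+s) + Jint μ (z+t))/2) := key_diff_bound h1 h2
      _ = ‖s - t‖ * ((Jint μ (z+s) + Jint μ (z+t))/2) := by ring_nf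
  have hnorm : ‖s - t‖ = 0 := by nlinarith [norm_nonneg (s - t)]
  exact sub_eq_zero.mp (norm_eq_zero.mp hnorm)

lemma jint_le {w : ℂ} (hw : 0 < w.im) : Jint μ w ≤ w.im⁻¹ * w.im⁻¹ := by
  have h1 : w.im * Jint μ w ≤ w.im⁻¹ := by
    rw [← im_stieltjes hw]
    exact le_trans (le_abs_self _)
      (le_trans (Complex.abs_im_le_norm _) (norm_stieltjes_le hw))
  have h2 : 0 < w.im⁻¹ := by positivity
  rw [← mul_le_mul_iff_right₀ hw]
  calc w.im * Jint μ w ≤ w.im⁻¹ := h1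
    _ = w.im * (w.im⁻¹ * w.im⁻¹) := by field_simp

lemma jint_lower {w : ℂ} (hw : 0 < w.im) {R : ℝ} (hR : 0 ≤ R)
    (hae : ∀ᵐ x ∂μ, |x| ≤ R) : ((R + ‖w‖)^2)⁻¹ ≤ Jint μ w := by
  have hwne : w ≠ 0 := fun h => by simp [h] at hw
  have hpos : 0 < R + ‖w‖ := by
    have := norm_pos_iff.mpr hwne
    linarith
  have hmono : ∀ᵐ (x:ℝ) ∂μ, ((R + ‖w‖)^2)⁻¹ ≤ ‖((x:ℂ) - w)⁻¹‖^2 := by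
    filter_upwards [hae] with x hx
    have h1 : ‖(x:ℂ) - w‖ ≤ R + ‖w‖ := by
      calc ‖(x:ℂ) - w‖ ≤ ‖(x:ℂ)‖ + ‖w‖ := norm_sub_le _ _
        _ ≤ R + ‖w‖ := by
            have : ‖(x:ℂ)‖ = |x| := by
              rw [Complex.norm_real, Real.norm_eq_abs]
            linarith [this ▸ hx]
    have h2 : (R + ‖w‖)⁻¹ ≤ ‖((x:ℂ) - w)⁻¹‖ := by
      rw [norm_inv]
      apply inv_anti₀ _ h1
      exact norm_pos_iff.mpr (sub_ne_zero' hw)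
    calc ((R + ‖w‖)^2)⁻¹ = ((R + ‖w‖)⁻¹)^2 := by rw [inv_pow]
      _ ≤ ‖((x:ℂ) - w)⁻¹‖^2 := pow_le_pow_left₀ (by positivity) h2 2
  calc ((R + ‖w‖)^2)⁻¹ = ∫ _, ((R + ‖w‖)^2)⁻¹ ∂μ := by simp
    _ ≤ Jint μ w := integral_mono_ae (integrable_const _) (integrable_invsq hw) hmono

end SC

noncomputable def iter (μ : Measure ℝ) (s : ℂ) : ℕ → ℂ → ℂ
  | 0 => fun _ => s
  | n+1 => fun z => stieltjes μ (z + iter μ s n z)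

section SC2
variable {μ : Measure ℝ} [IsProbabilityMeasure μ]

lemma local_solution {z₀ sstar : ℂ} (hz₀ : 0 < z₀.im) (hs : 0 < sstar.im)
    (hfix : sstar = stieltjes μ (z₀ + sstar)) :
    ∃ ε > 0, ball z₀ ε ⊆ {z : ℂ | 0 < z.im} ∧ ∃ g : ℂ → ℂ,
      DifferentiableOn ℂ g (ball z₀ ε) ∧
      ∀ z ∈ ball z₀ ε, 0 < (g z).im ∧ g z = stieltjes μ (z + g z) := by
  set wstar := z₀ + sstar with hwstar
  have hw : 0 < wstar.im := by rw [hwstar, Complex.add_im]; linarith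
  set k₀ := Jint μ wstar with hk₀def
  have hk₀ : k₀ < 1 := (jint_fixed hz₀ hs hfix).2
  have hk₀0 : 0 ≤ k₀ := jint_nonneg μ wstar
  set k := (1 + k₀)/2 with hkdef
  have hk1 : k < 1 := by rw [hkdef]; linarith
  have hk0 : 0 < k := by rw [hkdef]; linarith
  have hk₀k : k₀ < k := by rw [hkdef]; linarith
  -- find δ0 such that on ball wstar δ0, Jint < k and im > 0
  have hev : ∀ᶠ w in nhds wstar, Jint μ w < k ∧ 0 < w.im := by
    have h1 : ∀ᶠ w in nhds wstar, Jint μ w < k :=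
      (contAt_jint hw).eventually_lt continuousAt_const hk₀k
    have h2 : ∀ᶠ w in nhds wstar, 0 < w.im :=
      continuousAt_const.eventually_lt Complex.continuous_im.continuousAt hw
    exact h1.and h2
  obtain ⟨δ0, hδ0, hδ0p⟩ := Metric.eventually_nhds_iff.mp hev
  set δ := min δ0 (min sstar.im z₀.im) with hδdef
  have hδ : 0 < δ := lt_min hδ0 (lt_min hs hz₀)
  have hδ1 : δ ≤ δ0 := min_le_left _ _
  have hδ2 : δ ≤ sstar.im := le_trans (min_le_right _ _) (min_le_left _ _)
  have hδ3 : δ ≤ z₀.im := le_trans (min_le_right _ _) (min_le_right _ _)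
  set r := δ/4 with hrdef
  have hr : 0 < r := by rw [hrdef]; linarith
  set ε := r * (1 - k) with hεdef
  have hε : 0 < ε := mul_pos hr (by linarith)
  have hεr : ε ≤ r := by
    rw [hεdef]
    nlinarith
  -- main geometric facts
  have hF1 : ∀ z ∈ ball z₀ ε, ∀ s ∈ closedBall sstar r,
      Jint μ (z + s) < k ∧ 0 < (z + s).im := by
    intro z hz s hsm
    apply hδ0p
    calc dist (z + s) wstar ≤ dist z z₀ + dist s sstar := dist_add_add_le _ _ _ _
      _ < ε + r := by
          have := mem_ball.mp hz
          have := mem_closedBall.mp hsm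
          linarith
      _ ≤ r + r := by linarith
      _ ≤ δ0 := by rw [hrdef] at *; linarith
  have hballs : ball z₀ ε ⊆ {z : ℂ | 0 < z.im} := by
    intro z hz
    have h1 : |(z - z₀).im| ≤ ‖z - z₀‖ := Complex.abs_im_le_norm _
    rw [mem_ball, dist_eq_norm] at hz
    simp only [Complex.sub_im] at h1
    have := abs_le.1 h1
    simp only [Set.mem_setOf_eq]
    have hεz : ε ≤ z₀.im := by
      calc ε ≤ r := hεr
        _ ≤ z₀.im := by rw [hrdef]; linarith
    linarith [this.1]
  -- contraction
  have hC1 : ∀ z ∈ ball z₀ ε, ∀ s ∈ closedBall sstar r, ∀ t ∈ closedBall sstar r,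
      ‖stieltjes μ (z + s) - stieltjes μ (z + t)‖ ≤ k * ‖s - t‖ := by
    intro z hz s hsm t htm
    obtain ⟨hJs, hims⟩ := hF1 z hz s hsm
    obtain ⟨hJt, himt⟩ := hF1 z hz t htm
    calc ‖stieltjes μ (z + s) - stieltjes μ (z + t)‖
        ≤ ‖(z + s) - (z + t)‖ * ((Jint μ (z+s) + Jint μ (z+t))/2) :=
          key_diff_bound hims himt
      _ = ‖s - t‖ * ((Jint μ (z+s) + Jint μ (z+t))/2) := by
          rw [add_sub_add_left_eq_sub]
      _ ≤ ‖s - t‖ * k := by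
          apply mul_le_mul_of_nonneg_left _ (norm_nonneg _)
          linarith
      _ = k * ‖s - t‖ := mul_comm _ _
  -- base step distance
  have hbase : ∀ z ∈ ball z₀ ε, ‖stieltjes μ (z + sstar) - sstar‖ ≤ k * ε := by
    intro z hz
    have h1 : 0 < (z + sstar).im := (hF1 z hz sstar (mem_closedBall_self hr.le)).2
    have hJ1 : Jint μ (z + sstar) < k := (hF1 z hz sstar (mem_closedBall_self hr.le)).1
    calc ‖stieltjes μ (z + sstar) - sstar‖
        = ‖stieltjes μ (z + sstar) - stieltjes μ wstar‖ := by rw [← hfix]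
      _ ≤ ‖(z + sstar) - wstar‖ * ((Jint μ (z+sstar) + Jint μ wstar)/2) :=
          key_diff_bound h1 hw
      _ ≤ ‖z - z₀‖ * k := by
          apply mul_le_mul (le_of_eq (by rw [hwstar]; ring_nf)) (by linarith)
            (div_nonneg (add_nonneg (jint_nonneg μ _) (jint_nonneg μ _)) (by norm_num))
            (norm_nonneg _)
      _ ≤ ε * k := by
          rw [mem_ball, dist_eq_norm] at hz
          exact mul_le_mul_of_nonneg_right hz.le hk0.le
      _ = k * ε := mul_comm _ _
  -- self map
  have hC2 : ∀ z ∈ ball z₀ ε, ∀ s ∈ closedBall sstar r,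
      stieltjes μ (z + s) ∈ closedBall sstar r := by
    intro z hz s hsm
    rw [mem_closedBall, dist_eq_norm]
    calc ‖stieltjes μ (z + s) - sstar‖
        ≤ ‖stieltjes μ (z + s) - stieltjes μ (z + sstar)‖
          + ‖stieltjes μ (z + sstar) - sstar‖ := by
          have := norm_sub_le_norm_sub_add_norm_sub (stieltjes μ (z + s))
            (stieltjes μ (z + sstar)) sstar
          exact this
      _ ≤ k * ‖s - sstar‖ + k * ε :=
          add_le_add (hC1 z hz s hsm sstar (mem_closedBall_self hr.le)) (hbase z hz)
      _ ≤ k * r + k * ε := by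
          apply add_le_add_left
          apply mul_le_mul_of_nonneg_left _ hk0.le
          rw [← dist_eq_norm]
          exact mem_closedBall.mp hsm
      _ ≤ r := by
          have hkε : k * ε ≤ ε := by nlinarith
          rw [hεdef] at *
          nlinarith
  -- invariants of iterates
  have hI0 : ∀ n, ∀ z ∈ ball z₀ ε, iter μ sstar n z ∈ closedBall sstar r := by
    intro n
    induction n with
    | zero => intro z _; exact mem_closedBall_self hr.le
    | succ n ih =>
      intro z hz
      exact hC2 z hz _ (ih z hz)
  have hI1 : ∀ n, DifferentiableOn ℂ (iter μ sstar n) (ball z₀ ε) := by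
    intro n
    induction n with
    | zero => exact differentiableOn_const _
    | succ n ih =>
      intro z hz
      have hdn : DifferentiableAt ℂ (iter μ sstar n) z :=
        (ih z hz).differentiableAt (isOpen_ball.mem_nhds hz)
      have him : 0 < (z + iter μ sstar n z).im := (hF1 z hz _ (hI0 n z hz)).2
      exact ((diffAt_stieltjes him).comp z
        ((differentiableAt_id.add hdn))).differentiableWithinAt
  have hI2 : ∀ n, ∀ z ∈ ball z₀ ε,
      dist (iter μ sstar n z) (iter μ sstar (n+1) z) ≤ (k * ε) * k ^ n := by
    intro n
    induction n with
    | zero =>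
      intro z hz
      simp only [iter, pow_zero, mul_one]
      rw [dist_comm, dist_eq_norm]
      exact hbase z hz
    | succ n ih =>
      intro z hz
      have : iter μ sstar (n+1) z = stieltjes μ (z + iter μ sstar n z) := rfl
      calc dist (iter μ sstar (n+1) z) (iter μ sstar (n+2) z)
          = ‖stieltjes μ (z + iter μ sstar n z) - stieltjes μ (z + iter μ sstar (n+1) z)‖ := by
            rw [dist_eq_norm]; rfl
        _ ≤ k * ‖iter μ sstar n z - iter μ sstar (n+1) z‖ :=
            hC1 z hz _ (hI0 n z hz) _ (hI0 (n+1) z hz)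
        _ ≤ k * ((k * ε) * k ^ n) := by
            apply mul_le_mul_of_nonneg_left _ hk0.le
            rw [← dist_eq_norm]
            exact ih z hz
        _ = (k * ε) * k ^ (n+1) := by ring
  -- limit function
  set g : ℂ → ℂ := fun z => limUnder atTop (fun n => iter μ sstar n z) with hgdef
  have htend : ∀ z ∈ ball z₀ ε,
      Tendsto (fun n => iter μ sstar n z) atTop (nhds (g z)) := by
    intro z hz
    have hcs : CauchySeq (fun n => iter μ sstar n z) :=
      cauchySeq_of_le_geometric k (k * ε) hk1 (fun n => hI2 n z hz)
    exact hcs.tendsto_limUnder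
  have hgr : ∀ z ∈ ball z₀ ε, g z ∈ closedBall sstar r := by
    intro z hz
    exact isClosed_closedBall.mem_of_tendsto (htend z hz)
      (Filter.Eventually.of_forall fun n => hI0 n z hz)
  have hunif : TendstoUniformlyOn (fun n => iter μ sstar n) g atTop (ball z₀ ε) := by
    rw [Metric.tendstoUniformlyOn_iff]
    intro η hη
    have hlim : Tendsto (fun n : ℕ => (k * ε) * k ^ n / (1 - k)) atTop (nhds 0) := by
      have := tendsto_pow_atTop_nhds_zero_of_lt_one hk0.le hk1
      have h2 : Tendsto (fun n : ℕ => (k * ε) * k ^ n / (1 - k)) atTop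
          (nhds ((k * ε) * 0 / (1 - k))) := (this.const_mul (k * ε)).div_const (1 - k)
      simpa using h2
    have hev2 : ∀ᶠ n in atTop, (k * ε) * k ^ n / (1 - k) < η :=
      hlim.eventually_lt_const hη
    filter_upwards [hev2] with n hn z hz
    have := dist_le_of_le_geometric_of_tendsto k (k * ε) hk1
      (fun m => hI2 m z hz) (htend z hz) n
    rw [dist_comm]
    exact lt_of_le_of_lt this hn
  have hgdiff : DifferentiableOn ℂ g (ball z₀ ε) :=
    (hunif.tendstoLocallyUniformlyOn).differentiableOn
      (Filter.Eventually.of_forall hI1) isOpen_ball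
  refine ⟨ε, hε, hballs, g, hgdiff, fun z hz => ?_⟩
  have hgz := hgr z hz
  have hgim : 0 < (g z).im := by
    have h1 : |(g z - sstar).im| ≤ ‖g z - sstar‖ := Complex.abs_im_le_norm _
    rw [mem_closedBall, dist_eq_norm] at hgz
    simp only [Complex.sub_im] at h1
    have := abs_le.1 h1
    have : sstar.im - r ≤ (g z).im := by linarith [(abs_le.1 h1).1]
    have hrs : r < sstar.im := by rw [hrdef]; linarith
    linarith
  refine ⟨hgim, ?_⟩
  have himz : 0 < (z + g z).im := (hF1 z hz _ hgz).2
  have h1 : Tendsto (fun n => iter μ sstar (n+1) z) atTop (nhds (g z)) :=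
    (htend z hz).comp (tendsto_add_atTop_nat 1)
  have h2 : Tendsto (fun n => iter μ sstar (n+1) z) atTop
      (nhds (stieltjes μ (z + g z))) := by
    have h3 : Tendsto (fun n => z + iter μ sstar n z) atTop (nhds (z + g z)) :=
      tendsto_const_nhds.add (htend z hz)
    have h4 := ((contAt_stieltjes (μ:=μ) himz).tendsto.comp h3 :)
    exact h4
  exact tendsto_nhds_unique h1 h2

lemma jint_pos {w : ℂ} (hw : 0 < w.im) {R : ℝ} (hR : 0 ≤ R)
    (hae : ∀ᵐ (x:ℝ) ∂μ, |x| ≤ R) : 0 < Jint μ w := by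
  refine lt_of_lt_of_le ?_ (jint_lower hw hR hae)
  have h1 : 0 < ‖w‖ :=
    lt_of_lt_of_le hw (le_trans (le_abs_self _) (Complex.abs_im_le_norm w))
  positivity

lemma base_exists {R : ℝ} (hR : 0 ≤ R) (hae : ∀ᵐ (x:ℝ) ∂μ, |x| ≤ R) :
    ∃ s : ℂ, 0 < s.im ∧ s = stieltjes μ (2*Complex.I + s) := by
  set z₀ : ℂ := 2*Complex.I with hz₀def
  have hz₀im : z₀.im = 2 := by simp [hz₀def]
  set u : ℕ → ℂ := fun n => iter μ Complex.I n z₀ with hudef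
  have hInv : ∀ n, 0 < (u n).im ∧ ‖u n‖ ≤ 1 := by
    intro n
    induction n with
    | zero => constructor <;> simp [hudef, iter]
    | succ n ih =>
      have hw : 0 < (z₀ + u n).im := by
        rw [Complex.add_im, hz₀im]; linarith [ih.1]
      have hw2 : (2:ℝ) ≤ (z₀ + u n).im := by
        rw [Complex.add_im, hz₀im]; linarith [ih.1]
      have hu1 : u (n+1) = stieltjes μ (z₀ + u n) := rfl
      constructor
      · rw [hu1, im_stieltjes hw]
        have hJ : 0 < Jint μ (z₀ + u n) := jint_pos hw hR hae
        positivity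
      · rw [hu1]
        calc ‖stieltjes μ (z₀ + u n)‖ ≤ ((z₀ + u n).im)⁻¹ := norm_stieltjes_le hw
          _ ≤ 1 := by
            rw [inv_le_one_iff₀]
            right; linarith
  have hJle : ∀ n, Jint μ (z₀ + u n) ≤ 1/4 := by
    intro n
    have hw2 : (2:ℝ) ≤ (z₀ + u n).im := by
      rw [Complex.add_im, hz₀im]; linarith [(hInv n).1]
    have hw : 0 < (z₀ + u n).im := by linarith
    calc Jint μ (z₀ + u n) ≤ ((z₀ + u n).im)⁻¹ * ((z₀ + u n).im)⁻¹ := jint_le hw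
      _ ≤ (1/2) * (1/2) := by
          have h3 : ((z₀ + u n).im)⁻¹ ≤ 1/2 := by
            rw [inv_le_comm₀ hw (by norm_num)]
            linarith
          have h4 : (0:ℝ) ≤ ((z₀ + u n).im)⁻¹ := by positivity
          nlinarith
      _ = 1/4 := by norm_num
  have hcontr : ∀ n, dist (u (n+1)) (u (n+2)) ≤ (1/4) * dist (u n) (u (n+1)) := by
    intro n
    have hw1 : 0 < (z₀ + u n).im := by
      rw [Complex.add_im, hz₀im]; linarith [(hInv n).1]
    have hw2 : 0 < (z₀ + u (n+1)).im := by
      rw [Complex.add_im, hz₀im]; linarith [(hInv (n+1)).1]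
    calc dist (u (n+1)) (u (n+2))
        = ‖stieltjes μ (z₀ + u n) - stieltjes μ (z₀ + u (n+1))‖ := by
          rw [dist_eq_norm]; rfl
      _ ≤ ‖(z₀ + u n) - (z₀ + u (n+1))‖ *
            ((Jint μ (z₀ + u n) + Jint μ (z₀ + u (n+1)))/2) := key_diff_bound hw1 hw2
      _ ≤ ‖u n - u (n+1)‖ * (1/4) := by
          rw [add_sub_add_left_eq_sub]
          apply mul_le_mul_of_nonneg_left _ (norm_nonneg _)
          linarith [hJle n, hJle (n+1)]
      _ = (1/4) * dist (u n) (u (n+1)) := by rw [dist_eq_norm, mul_comm]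
  have hgeom : ∀ n, dist (u n) (u (n+1)) ≤ (dist (u 0) (u 1)) * (1/4)^n := by
    intro n
    induction n with
    | zero => simp
    | succ n ih =>
      calc dist (u (n+1)) (u (n+2)) ≤ (1/4) * dist (u n) (u (n+1)) := hcontr n
        _ ≤ (1/4) * ((dist (u 0) (u 1)) * (1/4)^n) := by
            apply mul_le_mul_of_nonneg_left ih (by norm_num)
        _ = (dist (u 0) (u 1)) * (1/4)^(n+1) := by ring
  have hcs : CauchySeq u :=
    cauchySeq_of_le_geometric (1/4) (dist (u 0) (u 1)) (by norm_num) hgeom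
  obtain ⟨s, hst⟩ := cauchySeq_tendsto_of_complete hcs
  have hsim0 : 0 ≤ s.im := by
    have h1 : Tendsto (fun n => (u n).im) atTop (nhds s.im) :=
      (Complex.continuous_im.continuousAt.tendsto.comp hst :)
    exact le_of_tendsto_of_tendsto' tendsto_const_nhds h1 (fun n => (hInv n).1.le)
  have himw : 0 < (z₀ + s).im := by rw [Complex.add_im, hz₀im]; linarith
  have hfix : s = stieltjes μ (z₀ + s) := by
    have h1 : Tendsto (fun n => u (n+1)) atTop (nhds s) :=
      hst.comp (tendsto_add_atTop_nat 1)
    have h3 : Tendsto (fun n => z₀ + u n) atTop (nhds (z₀ + s)) :=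
      tendsto_const_nhds.add hst
    have h2 : Tendsto (fun n => u (n+1)) atTop (nhds (stieltjes μ (z₀ + s))) :=
      ((contAt_stieltjes (μ:=μ) himw).tendsto.comp h3 :)
    exact tendsto_nhds_unique h1 h2
  refine ⟨s, ?_, hfix⟩
  rw [hfix, im_stieltjes himw]
  have hJ : 0 < Jint μ (z₀ + s) := jint_pos himw hR hae
  positivity

lemma limit_solution {R : ℝ} (hR : 0 ≤ R) (hae : ∀ᵐ (x:ℝ) ∂μ, |x| ≤ R)
    {z : ℂ} (hz : 0 < z.im) (zseq sseq : ℕ → ℂ)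
    (hzim : ∀ n, 0 < (zseq n).im) (hsim : ∀ n, 0 < (sseq n).im)
    (hfix : ∀ n, sseq n = stieltjes μ (zseq n + sseq n))
    (hzt : Tendsto zseq atTop (nhds z)) :
    ∃ s : ℂ, 0 < s.im ∧ s = stieltjes μ (z + s) := by
  -- eventual bounds
  obtain ⟨N, hN⟩ := (Metric.tendsto_atTop.mp hzt) (z.im/2) (by linarith)
  set y : ℕ → ℂ := fun n => zseq (n + N) with hydef
  set t : ℕ → ℂ := fun n => sseq (n + N) with htdef
  have hyim : ∀ n, z.im/2 < (y n).im := by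
    intro n
    have h1 := hN (n + N) (Nat.le_add_left N n)
    have h2 : |(zseq (n+N) - z).im| ≤ ‖zseq (n+N) - z‖ := Complex.abs_im_le_norm _
    rw [dist_eq_norm] at h1
    simp only [Complex.sub_im] at h2
    have := abs_le.1 h2
    simp only [hydef]
    linarith [this.1]
  have hynorm : ∀ n, ‖y n‖ ≤ ‖z‖ + z.im/2 := by
    intro n
    have h1 := hN (n + N) (Nat.le_add_left N n)
    rw [dist_eq_norm] at h1
    calc ‖y n‖ = ‖(zseq (n+N) - z) + z‖ := by simp [hydef]
      _ ≤ ‖zseq (n+N) - z‖ + ‖z‖ := norm_add_le _ _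
      _ ≤ ‖z‖ + z.im/2 := by linarith
  set M : ℝ := 2/z.im with hMdef
  have hM : 0 < M := by positivity
  have hwim : ∀ n, 0 < (y n + t n).im := by
    intro n
    rw [Complex.add_im]
    linarith [hyim n, (hsim (n+N)).le, hzim (n+N)]
  have htnorm : ∀ n, ‖t n‖ ≤ M := by
    intro n
    have h1 : t n = stieltjes μ (y n + t n) := hfix (n+N)
    rw [h1]
    calc ‖stieltjes μ (y n + t n)‖ ≤ ((y n + t n).im)⁻¹ := norm_stieltjes_le (hwim n)
      _ ≤ M := by
          rw [hMdef, inv_le_comm₀ (hwim n) (by positivity), inv_div,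
            Complex.add_im]
          have h2 := hyim n
          have h3 : 0 < (t n).im := hsim (n+N)
          linarith
  set B : ℝ := ‖z‖ + z.im/2 with hBdef
  have hwnorm : ∀ n, ‖y n + t n‖ ≤ B + M := by
    intro n
    calc ‖y n + t n‖ ≤ ‖y n‖ + ‖t n‖ := norm_add_le _ _
      _ ≤ B + M := add_le_add (hynorm n) (htnorm n)
  set δ : ℝ := (z.im/2) * ((R + (B + M))^2)⁻¹ with hδdef
  have hBM : 0 < R + (B + M) := by
    have : (0:ℝ) ≤ B := by
      rw [hBdef]; positivity
    linarith
  have hδpos : 0 < δ := by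
    rw [hδdef]; positivity
  have htim : ∀ n, δ ≤ (t n).im := by
    intro n
    have h1 : (t n).im = (y n + t n).im * Jint μ (y n + t n) := by
      conv_lhs => rw [show t n = stieltjes μ (y n + t n) from hfix (n+N)]
      rw [im_stieltjes (hwim n)]
    have hJl : ((R + (B + M))^2)⁻¹ ≤ Jint μ (y n + t n) := by
      refine le_trans ?_ (jint_lower (hwim n) hR hae)
      have hwn : 0 < ‖y n + t n‖ :=
        lt_of_lt_of_le (hwim n) (le_trans (le_abs_self _) (Complex.abs_im_le_norm _))
      apply inv_anti₀ (by nlinarith)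
      apply pow_le_pow_left₀ (by linarith)
      linarith [hwnorm n]
    have h2 : z.im/2 ≤ (y n + t n).im := by
      rw [Complex.add_im]
      have := hyim n
      have h3 : 0 < (t n).im := hsim (n+N)
      linarith
    have hJ0 : 0 ≤ Jint μ (y n + t n) := jint_nonneg μ _
    calc δ = (z.im/2) * ((R + (B + M))^2)⁻¹ := hδdef
      _ ≤ (y n + t n).im * Jint μ (y n + t n) := by
          apply mul_le_mul h2 hJl (by positivity) (by linarith)
      _ = (t n).im := h1.symm
  -- extract converging subsequence
  have hbounded : ∀ n, t n ∈ closedBall (0:ℂ) M := by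
    intro n
    rw [mem_closedBall, dist_zero_right]
    exact htnorm n
  obtain ⟨s, _, φ, hφ, hts⟩ :=
    tendsto_subseq_of_bounded (isBounded_closedBall (x := (0:ℂ)) (r := M)) hbounded
  have hsim2 : δ ≤ s.im := by
    have h1 : Tendsto (fun n => (t (φ n)).im) atTop (nhds s.im) :=
      (Complex.continuous_im.continuousAt.tendsto.comp hts :)
    exact le_of_tendsto_of_tendsto' tendsto_const_nhds h1 (fun n => htim (φ n))
  have himzs : 0 < (z + s).im := by
    rw [Complex.add_im]; linarith
  have hyt : Tendsto (fun n => y (φ n)) atTop (nhds z) := by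
    have h1 : Tendsto y atTop (nhds z) := hzt.comp (tendsto_add_atTop_nat N)
    exact h1.comp hφ.tendsto_atTop
  have hsum : Tendsto (fun n => y (φ n) + t (φ n)) atTop (nhds (z + s)) :=
    hyt.add hts
  have h1 : Tendsto (fun n => t (φ n)) atTop (nhds (stieltjes μ (z + s))) := by
    have h2 : (fun n => t (φ n)) = fun n => stieltjes μ (y (φ n) + t (φ n)) := by
      funext n; exact hfix (φ n + N)
    rw [h2]
    exact ((contAt_stieltjes (μ:=μ) himzs).tendsto.comp hsum :)
  exact ⟨s, by linarith, tendsto_nhds_unique hts h1⟩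

end SC2

theorem exists_unique_self_consistent
    (μ : Measure ℝ) [IsProbabilityMeasure μ]
    (a b : ℝ) (hsupp : μ (Set.Icc a b)ᶜ = 0) :
    ∃ s₀ : ℂ → ℂ,
      (DifferentiableOn ℂ s₀ {z : ℂ | 0 < z.im}) ∧
      (∀ z : ℂ, 0 < z.im → 0 < (s₀ z).im ∧ s₀ z = stieltjes μ (z + s₀ z)) ∧
      (∀ s₁ : ℂ → ℂ,
        DifferentiableOn ℂ s₁ {z : ℂ | 0 < z.im} →
        (∀ z : ℂ, 0 < z.im → 0 < (s₁ z).im ∧ s₁ z = stieltjes μ (z + s₁ z)) →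
        ∀ z : ℂ, 0 < z.im → s₁ z = s₀ z) := by
  classical
  set U : Set ℂ := {z : ℂ | 0 < z.im} with hUdef
  set R : ℝ := |a| + |b| with hRdef
  have hR : 0 ≤ R := by positivity
  have haemem : ∀ᵐ (x:ℝ) ∂μ, x ∈ Set.Icc a b := by
    rw [MeasureTheory.ae_iff]
    convert hsupp using 2
    rfl
  have hae : ∀ᵐ (x:ℝ) ∂μ, |x| ≤ R := by
    filter_upwards [haemem] with x hx
    rw [Set.mem_Icc] at hx
    rw [abs_le, hRdef]
    constructor
    · have h1 : -|a| ≤ a := neg_abs_le a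
      have h2 : 0 ≤ |b| := abs_nonneg b
      linarith [hx.1]
    · have h1 : b ≤ |b| := le_abs_self b
      have h2 : 0 ≤ |a| := abs_nonneg a
      linarith [hx.2]
  set A : Set ℂ := {z : ℂ | 0 < z.im ∧ ∃ s : ℂ, 0 < s.im ∧ s = stieltjes μ (z + s)}
    with hAdef
  have hAopen : IsOpen A := by
    rw [Metric.isOpen_iff]
    rintro z₀ ⟨hz₀, s, hs, hfix⟩
    obtain ⟨ε, hε, hballU, g, hgdiff, hg⟩ := local_solution hz₀ hs hfix
    exact ⟨ε, hε, fun z hz => ⟨hballU hz, g z, (hg z hz).1, (hg z hz).2⟩⟩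
  have hUconn : IsPreconnected U := (convex_halfSpace_im_gt 0).isPreconnected
  have hmemI : (2*Complex.I) ∈ U := by
    simp [hUdef]
  have hnonempty : (U ∩ A).Nonempty := by
    obtain ⟨s, hs1, hs2⟩ := base_exists (μ:=μ) hR hae
    refine ⟨2*Complex.I, hmemI, ?_, s, hs1, hs2⟩
    simpa using hmemI
  have hclosure : closure A ∩ U ⊆ A := by
    rintro z ⟨hzc, hzU⟩
    obtain ⟨zs, hzs, hzt⟩ := mem_closure_iff_seq_limit.mp hzc
    have hzim : ∀ n, 0 < (zs n).im := fun n => (hzs n).1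
    choose ss hss1 hss2 using fun n => (hzs n).2
    obtain ⟨s, hs1, hs2⟩ := limit_solution hR hae hzU zs ss hzim hss1 hss2 hzt
    exact ⟨hzU, s, hs1, hs2⟩
  have hUA : U ⊆ A :=
    IsPreconnected.subset_of_closure_inter_subset hUconn hAopen hnonempty hclosure
  set s₀ : ℂ → ℂ := fun z =>
    if h : ∃ s : ℂ, 0 < s.im ∧ s = stieltjes μ (z + s) then h.choose else 0 with hs₀def
  have hs₀spec : ∀ z : ℂ, 0 < z.im → 0 < (s₀ z).im ∧ s₀ z = stieltjes μ (z + s₀ z) := by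
    intro z hz
    obtain ⟨_, hex⟩ := hUA (show z ∈ U from hz)
    simp only [hs₀def]
    rw [dif_pos hex]
    exact hex.choose_spec
  have hdiff : DifferentiableOn ℂ s₀ U := by
    intro z hz
    obtain ⟨hs0im, hs0fix⟩ := hs₀spec z hz
    obtain ⟨ε, hε, hballU, g, hgdiff, hg⟩ := local_solution hz hs0im hs0fix
    have heq : s₀ =ᶠ[nhds z] g := by
      filter_upwards [isOpen_ball.mem_nhds (mem_ball_self hε)] with z' hz'
      have hz'U : 0 < z'.im := hballU hz'
      exact fixed_unique hz'U (hs₀spec z' hz'U).1 (hg z' hz').1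
        (hs₀spec z' hz'U).2 (hg z' hz').2
    have hga : DifferentiableAt ℂ g z :=
      (hgdiff z (mem_ball_self hε)).differentiableAt
        (isOpen_ball.mem_nhds (mem_ball_self hε))
    exact (hga.congr_of_eventuallyEq heq).differentiableWithinAt
  refine ⟨s₀, hdiff, hs₀spec, ?_⟩
  intro s₁ _ hs₁ z hz
  exact fixed_unique hz (hs₁ z hz).1 (hs₀spec z hz).1 (hs₁ z hz).2 (hs₀spec z hz).2
end

section
/- Let μ be a compactly supported probability measure on ℝ and let s₀ be the unique holomorphic self-map of the upper half-plane satisfying s₀(z) = m_μ(z + s₀(z)). Then for every R > 0 there is a constant C (depending on R and μ) such that |s₀(z) - s₀(z')| ≤ C|z - z'|^{1/3} for all z, z' in the upper half-plane with |z|, |z'| ≤ R. -/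
open MeasureTheory

namespace HolderS0Aux
open Complex Set Metric

lemma sub_im_eq (w : ℂ) (x : ℝ) : ((x : ℂ) - w).im = -w.im := by simp

lemma sub_ne (w : ℂ) (hw : 0 < w.im) (x : ℝ) : ((x : ℂ) - w) ≠ 0 := by
  intro h
  have h2 := sub_im_eq w x
  rw [h] at h2
  simp at h2
  linarith

lemma abs_lb (w : ℂ) (hw : 0 < w.im) (x : ℝ) : w.im ≤ ‖(x : ℂ) - w‖ := by
  calc w.im = |((x : ℂ) - w).im| := by rw [sub_im_eq, abs_neg, abs_of_pos hw]
  _ ≤ _ := Complex.abs_im_le_norm _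

lemma abs_inv_ub (w : ℂ) (hw : 0 < w.im) (x : ℝ) :
    ‖((x : ℂ) - w)⁻¹‖ ≤ (w.im)⁻¹ := by
  rw [norm_inv]
  exact inv_anti₀ hw (abs_lb w hw x)

lemma int_bdd {E : Type*} [NormedAddCommGroup E] (μ : Measure ℝ) [IsFiniteMeasure μ]
    {f : ℝ → E} (hf : AEStronglyMeasurable f μ) {c : ℝ} (hc : ∀ x, ‖f x‖ ≤ c) :
    Integrable f μ :=
  (integrable_const c).mono' hf (ae_of_all _ hc)

lemma cont_inv (w : ℂ) (hw : 0 < w.im) :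
    Continuous (fun x : ℝ => ((x : ℂ) - w)⁻¹) :=
  (Complex.continuous_ofReal.sub continuous_const).inv₀ (fun x => sub_ne w hw x)

lemma integrable_inv (μ : Measure ℝ) [IsProbabilityMeasure μ] (w : ℂ) (hw : 0 < w.im) :
    Integrable (fun x : ℝ => ((x : ℂ) - w)⁻¹) μ :=
  int_bdd μ (cont_inv w hw).aestronglyMeasurable (fun x => abs_inv_ub w hw x)

lemma stieltjes_hasDerivAt (μ : Measure ℝ) [IsProbabilityMeasure μ] (w : ℂ) (hw : 0 < w.im) :
    HasDerivAt (stieltjes μ) (∫ x, (((x : ℂ) - w) ^ 2)⁻¹ ∂μ) w := by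
  have hε : (0:ℝ) < w.im / 2 := by linarith
  have hball : ∀ w' ∈ ball w (w.im / 2), w.im / 2 ≤ w'.im := by
    intro w' hw'
    have h1 : |(w' - w).im| ≤ ‖w' - w‖ := Complex.abs_im_le_norm _
    have h2 : ‖w' - w‖ < w.im / 2 := by
      rwa [mem_ball, Complex.dist_eq] at hw'
    have h3 : |w'.im - w.im| < w.im / 2 := by
      rw [Complex.sub_im] at h1; linarith [h1]
    have := abs_lt.mp h3
    linarith [this.1]
  have key := hasDerivAt_integral_of_dominated_loc_of_lip
    (F := fun w' (x : ℝ) => ((x : ℂ) - w')⁻¹)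
    (F' := fun x : ℝ => (((x : ℂ) - w) ^ 2)⁻¹)
    (x₀ := w) (μ := μ) (bound := fun _ : ℝ => (2 / w.im) ^ 2) (s := ball w (w.im / 2)) (ball_mem_nhds w hε)
    ?_ ?_ ?_ ?_ ?_ ?_
  · exact key.2
  · -- measurability eventually
    filter_upwards [IsOpen.mem_nhds (isOpen_lt continuous_const Complex.continuous_im)
      (show w ∈ {z : ℂ | 0 < z.im} from hw)] with w' hw'
    exact (cont_inv w' hw').aestronglyMeasurable
  · exact integrable_inv μ w hw
  · exact ((Complex.continuous_ofReal.sub continuous_const).pow 2).inv₀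
      (fun x => pow_ne_zero 2 (sub_ne w hw x)) |>.aestronglyMeasurable
  · -- Lipschitz
    refine Filter.Eventually.of_forall (fun x => ?_)
    rw [lipschitzOnWith_iff_dist_le_mul]
    intro w₁ h₁ w₂ h₂
    have hi₁ : w.im / 2 ≤ w₁.im := hball w₁ h₁
    have hi₂ : w.im / 2 ≤ w₂.im := hball w₂ h₂
    have hp₁ : 0 < w₁.im := by linarith
    have hp₂ : 0 < w₂.im := by linarith
    have hne₁ := sub_ne w₁ hp₁ x
    have hne₂ := sub_ne w₂ hp₂ x
    have hid : ((x : ℂ) - w₁)⁻¹ - ((x : ℂ) - w₂)⁻¹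
        = ((x : ℂ) - w₁)⁻¹ * (w₁ - w₂) * ((x : ℂ) - w₂)⁻¹ := by
      field_simp
      ring
    rw [Complex.dist_eq, Complex.dist_eq, hid]
    rw [norm_mul, norm_mul]
    have b₁ : ‖((x : ℂ) - w₁)⁻¹‖ ≤ 2 / w.im := by
      have := abs_inv_ub w₁ hp₁ x
      have h2 : (w₁.im)⁻¹ ≤ 2 / w.im := by
        rw [show (2 : ℝ) / w.im = (w.im/2)⁻¹ by field_simp]
        exact inv_anti₀ hε hi₁
      calc ‖((x : ℂ) - w₁)⁻¹‖ ≤ (w₁.im)⁻¹ := this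
        _ ≤ 2 / w.im := h2
    have b₂ : ‖((x : ℂ) - w₂)⁻¹‖ ≤ 2 / w.im := by
      have := abs_inv_ub w₂ hp₂ x
      have h2 : (w₂.im)⁻¹ ≤ 2 / w.im := by
        rw [show (2 : ℝ) / w.im = (w.im/2)⁻¹ by field_simp]
        exact inv_anti₀ hε hi₂
      exact le_trans this h2
    have hco : ((Real.nnabs ((2 / w.im) ^ 2)) : ℝ) = (2 / w.im) ^ 2 := by
      rw [Real.coe_nnabs]
      exact _root_.abs_of_nonneg (by positivity)
    rw [hco]
    have h20 : (0:ℝ) ≤ 2 / w.im := by positivity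
    calc ‖((x:ℂ) - w₁)⁻¹‖ * ‖w₁ - w₂‖ * ‖((x:ℂ) - w₂)⁻¹‖
        ≤ (2 / w.im) * ‖w₁ - w₂‖ * (2 / w.im) := by
          apply mul_le_mul (mul_le_mul_of_nonneg_right b₁ (by positivity)) b₂ (by positivity)
          positivity
      _ = (2 / w.im) ^ 2 * ‖w₁ - w₂‖ := by ring
  · exact (integrable_const _)
  · refine Filter.Eventually.of_forall (fun x => ?_)
    have h1 : HasDerivAt (fun w' : ℂ => (x : ℂ) - w') (-1) w := by
      simpa using (hasDerivAt_id w).const_sub (x : ℂ)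
    have h2 := h1.inv (sub_ne w hw x)
    rw [neg_neg, one_div] at h2
    exact h2


lemma sq_integral_le (μ : Measure ℝ) [IsProbabilityMeasure μ] {g : ℝ → ℝ}
    (hg : Integrable g μ) (hg2 : Integrable (fun x => g x ^ 2) μ) :
    (∫ x, g x ∂μ) ^ 2 ≤ ∫ x, g x ^ 2 ∂μ := by
  set c := ∫ x, g x ∂μ with hc
  have h0 : 0 ≤ ∫ x, (g x - c) ^ 2 ∂μ := integral_nonneg fun x => sq_nonneg _
  have hexp : (fun x => (g x - c) ^ 2) = fun x => (g x ^ 2 - (2 * c) * g x) + c ^ 2 := by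
    funext x; ring
  have hint1 : Integrable (fun x => g x ^ 2 - (2 * c) * g x) μ := hg2.sub (hg.const_mul (2 * c))
  rw [hexp, integral_add hint1 (integrable_const _),
      integral_sub hg2 (hg.const_mul (2 * c)), integral_const_mul, integral_const,
      probReal_univ, smul_eq_mul, one_mul] at h0
  nlinarith [h0]

set_option maxHeartbeats 2000000 in
lemma deriv_bound (μ : Measure ℝ) [IsProbabilityMeasure μ] (s₀ : ℂ → ℂ)
    (hs₀holo : DifferentiableOn ℂ s₀ {z : ℂ | 0 < z.im})
    (hs₀ : ∀ z : ℂ, 0 < z.im → 0 < (s₀ z).im ∧ s₀ z = stieltjes μ (z + s₀ z))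
    (B : ℝ) (hB : 1 ≤ B) (z : ℂ) (hz : 0 < z.im) (hzB : z.im ≤ B) :
    ‖deriv s₀ z‖ * (z.im ^ ((1:ℝ)/3)) ^ 2 ≤ 2 * B := by
  obtain ⟨ht, hfix⟩ := hs₀ z hz
  set t := (s₀ z).im with htdef
  set w := z + s₀ z with hwdef
  have hwim : w.im = z.im + t := by rw [hwdef, Complex.add_im]
  have hw : 0 < w.im := by rw [hwim]; linarith
  set g : ℝ → ℝ := fun x => ‖((x : ℂ) - w)⁻¹‖ with hgdef
  have hgc : Continuous g := continuous_norm.comp (cont_inv w hw)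
  have hg0 : ∀ x, 0 ≤ g x := fun x => norm_nonneg _
  have hgb : ∀ x, g x ≤ (w.im)⁻¹ := fun x => abs_inv_ub w hw x
  have hint : ∀ n : ℕ, Integrable (fun x => g x ^ n) μ := by
    intro n
    refine int_bdd μ ((hgc.pow n).aestronglyMeasurable) (c := ((w.im)⁻¹) ^ n) ?_
    intro x
    rw [Real.norm_eq_abs, _root_.abs_of_nonneg (by positivity)]
    exact pow_le_pow_left₀ (hg0 x) (hgb x) n
  set p := ∫ x, g x ^ 2 ∂μ with hpdef
  set q := ∫ x, g x ^ 4 ∂μ with hqdef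
  have hp0 : 0 ≤ p := integral_nonneg fun x => by positivity
  have hq0 : 0 ≤ q := integral_nonneg fun x => by positivity
  -- Im identity : t = w.im * p
  have hptw : ∀ x : ℝ, (((x : ℂ) - w)⁻¹).im = w.im * g x ^ 2 := by
    intro x
    have hne := sub_ne w hw x
    have habs : (0:ℝ) < ‖(x:ℂ) - w‖ := lt_of_lt_of_le hw (abs_lb w hw x)
    rw [Complex.inv_im]
    have h1 : ((x:ℂ) - w).im = -w.im := by simp
    rw [h1, neg_neg, Complex.normSq_eq_norm_sq, hgdef]
    simp only [norm_inv]
    field_simp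
  have him : t = w.im * p := by
    have h3 : ∫ x, (((x:ℂ) - w)⁻¹).im ∂μ = (stieltjes μ w).im := by
      have := integral_im (𝕜 := ℂ) (integrable_inv μ w hw)
      simpa [stieltjes] using this
    have h4 : ∫ x, (((x:ℂ) - w)⁻¹).im ∂μ = w.im * p := by
      rw [hpdef]
      rw [show (fun x : ℝ => (((x:ℂ) - w)⁻¹).im) = fun x => w.im * g x ^ 2 from funext hptw]
      exact integral_const_mul _ _
    rw [htdef, hfix, ← h3, h4]

  have hpe : p * (z.im + t) = t := by
    rw [hwim] at him
    linear_combination -him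
  -- |s₀ z|² ≤ p and t ≤ 1, p ≤ 1
  have habs : ‖s₀ z‖ ≤ ∫ x, g x ∂μ := by
    rw [hfix]
    calc ‖stieltjes μ w‖ = ‖∫ x, ((x:ℂ) - w)⁻¹ ∂μ‖ := by
          rw [stieltjes]
      _ ≤ ∫ x, ‖((x:ℂ) - w)⁻¹‖ ∂μ := norm_integral_le_integral_norm _
      _ = ∫ x, g x ∂μ := rfl
  have hintg : Integrable g μ := by simpa using hint 1
  have hcs1 : (∫ x, g x ∂μ) ^ 2 ≤ p := sq_integral_le μ hintg (hint 2)
  have habs2 : ‖s₀ z‖ ^ 2 ≤ p :=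
    le_trans (pow_le_pow_left₀ (norm_nonneg _) habs 2) hcs1
  have htle : t ≤ ‖s₀ z‖ := le_trans (le_abs_self _) (Complex.abs_im_le_norm _)
  have ht2p : t ^ 2 ≤ p := le_trans (pow_le_pow_left₀ ht.le htle 2) habs2
  have ht1 : t ≤ 1 := by
    have h3 : t^2 * (z.im + t) ≤ p * (z.im + t) :=
      mul_le_mul_of_nonneg_right ht2p (by linarith)
    rw [hpe] at h3
    nlinarith [h3, hz, ht]
  have hp1 : p ≤ 1 := by nlinarith [hpe, hz, ht, hp0]
  have hcs2 : p ^ 2 ≤ q := by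
    have h := sq_integral_le μ (hint 2) (g := fun x => g x ^ 2) ?_
    · rw [← hpdef] at h
      refine le_trans h ?_
      rw [hqdef]
      refine le_of_eq ?_
      congr 1
      funext x
      ring
    · have : (fun x => (g x ^ 2) ^ 2) = fun x => g x ^ 4 := by funext x; ring
      rw [this]
      exact hint 4
  -- D
  set D := ∫ x, (((x:ℂ) - w) ^ 2)⁻¹ ∂μ with hDdef
  have hD := stieltjes_hasDerivAt μ w hw
  have hcontD : Continuous (fun x : ℝ => (((x:ℂ) - w) ^ 2)⁻¹) :=
    ((Complex.continuous_ofReal.sub continuous_const).pow 2).inv₀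
      (fun x => pow_ne_zero 2 (sub_ne w hw x))
  have hnormD : ∀ x : ℝ, ‖(((x:ℂ) - w) ^ 2)⁻¹‖ = g x ^ 2 := by
    intro x
    rw [norm_inv, norm_pow, hgdef]
    simp [norm_inv, inv_pow]
  have hintD : Integrable (fun x : ℝ => (((x:ℂ) - w) ^ 2)⁻¹) μ := by
    refine int_bdd μ hcontD.aestronglyMeasurable (c := ((w.im)⁻¹) ^ 2) ?_
    intro x
    rw [hnormD x]
    exact pow_le_pow_left₀ (hg0 x) (hgb x) 2
  have hDre : D.re = p - 2 * w.im ^ 2 * q := by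
    have h3 : ∫ x, ((((x:ℂ) - w) ^ 2)⁻¹).re ∂μ = D.re := by
      have := integral_re (𝕜 := ℂ) hintD
      simpa using this
    have hptr : ∀ x : ℝ, ((((x:ℂ) - w) ^ 2)⁻¹).re = g x ^ 2 - 2 * w.im ^ 2 * g x ^ 4 := by
      intro x
      have hne := sub_ne w hw x
      have hn0 : Complex.normSq ((x:ℂ) - w) ≠ 0 := by
        simpa [Complex.normSq_eq_zero] using hne
      rw [Complex.inv_re]
      have h4 : (((x:ℂ) - w) ^ 2).re
          = ((x:ℂ) - w).re * ((x:ℂ) - w).re - ((x:ℂ) - w).im * ((x:ℂ) - w).im := by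
        rw [sq, Complex.mul_re]
      have h5 : Complex.normSq (((x:ℂ) - w) ^ 2) = (Complex.normSq ((x:ℂ) - w)) ^ 2 := by
        rw [map_pow]
      have h6 : ((x:ℂ) - w).im = -w.im := by simp
      have h7 : ((x:ℂ) - w).re * ((x:ℂ) - w).re
          = Complex.normSq ((x:ℂ) - w) - w.im ^ 2 := by
        rw [Complex.normSq_apply, h6]; ring
      have h8 : g x ^ 2 = (Complex.normSq ((x:ℂ) - w))⁻¹ := by
        rw [hgdef]
        simp only [norm_inv]
        rw [Complex.normSq_eq_norm_sq, inv_pow]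
      have h9 : g x ^ 4 = ((Complex.normSq ((x:ℂ) - w)) ^ 2)⁻¹ := by
        rw [hgdef]
        simp only [norm_inv]
        rw [Complex.normSq_eq_norm_sq, ← inv_pow, ← inv_pow, ← pow_mul]
      rw [h4, h5, h6, h7, h8, h9]
      field_simp
      ring
    have h4 : ∫ x, ((((x:ℂ) - w) ^ 2)⁻¹).re ∂μ = p - 2 * w.im ^ 2 * q := by
      rw [show (fun x : ℝ => ((((x:ℂ) - w) ^ 2)⁻¹).re)
          = fun x => g x ^ 2 - (2 * w.im ^ 2) * g x ^ 4 from funext (by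
            intro x; rw [hptr x])]
      rw [integral_sub (hint 2) ((hint 4).const_mul _), integral_const_mul]
    rw [← h3, h4]
  have hDabs : ‖D‖ ≤ p := by
    calc ‖D‖ = ‖∫ x, (((x:ℂ) - w) ^ 2)⁻¹ ∂μ‖ := by rw [hDdef]
      _ ≤ ∫ x, ‖(((x:ℂ) - w) ^ 2)⁻¹‖ ∂μ := norm_integral_le_integral_norm _
      _ = p := by
          rw [hpdef]; congr 1; funext x; exact hnormD x
  -- derivative equation
  have hop : IsOpen {z : ℂ | 0 < z.im} := isOpen_lt continuous_const Complex.continuous_im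
  have hda : DifferentiableAt ℂ s₀ z := hs₀holo.differentiableAt (hop.mem_nhds hz)
  have h1 : HasDerivAt s₀ (deriv s₀ z) z := hda.hasDerivAt
  have hgd : HasDerivAt (fun y => y + s₀ y) (1 + deriv s₀ z) z := (hasDerivAt_id z).add h1
  have hcomp : HasDerivAt (stieltjes μ ∘ fun y => y + s₀ y) (D * (1 + deriv s₀ z)) z :=
    hD.comp z hgd
  have heq : s₀ =ᶠ[nhds z] (stieltjes μ ∘ fun y => y + s₀ y) := by
    filter_upwards [hop.mem_nhds hz] with y hy
    exact (hs₀ y hy).2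
  have h2 : HasDerivAt s₀ (D * (1 + deriv s₀ z)) z := hcomp.congr_of_eventuallyEq heq
  have hde : deriv s₀ z = D * (1 + deriv s₀ z) := h1.unique h2
  have hprod : deriv s₀ z * (1 - D) = D := by linear_combination hde
  -- r and key bound
  clear_value t g p q D w
  clear hfix htdef hwdef hgdef hgc hg0 hgb hint hpdef hqdef hptw him habs hintg hcs1 habs2
    htle ht2p hDdef hD hcontD hnormD hintD hop hda h1 hgd hcomp heq h2 hde
  clear g
  set r := z.im ^ ((1:ℝ)/3) with hrdef
  have hrpos : 0 < r := Real.rpow_pos_of_pos hz _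
  have hr3 : r ^ 3 = z.im := by
    rw [hrdef, ← Real.rpow_natCast (z.im ^ ((1:ℝ)/3)) 3, ← Real.rpow_mul hz.le]
    norm_num
  have hBpos : (0:ℝ) < B := lt_of_lt_of_le one_pos hB
  have hrB : r ^ 2 ≤ B := by
    rcases le_or_gt r 1 with h | h
    · nlinarith [hrpos, h, hB]
    · nlinarith [hr3, hzB, hrpos, h]
  have hkey : r ^ 2 / (2 * B) ≤ 1 - D.re := by
    rw [hDre, hwim]
    have he : t ^ 2 = (p * (z.im + t)) ^ 2 := by rw [hpe]
    have hm : (p * (z.im + t)) ^ 2 ≤ q * (z.im + t) ^ 2 := by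
      calc (p * (z.im + t)) ^ 2 = p ^ 2 * (z.im + t) ^ 2 := by ring
        _ ≤ q * (z.im + t) ^ 2 := mul_le_mul_of_nonneg_right hcs2 (sq_nonneg _)
    have hq2 : 2 * t ^ 2 ≤ 2 * (z.im + t) ^ 2 * q := by linarith [he, hm]
    rcases le_total t r with hc | hc
    · have ha : r ^ 2 * t ≤ r ^ 2 * r := mul_le_mul_of_nonneg_left hc (sq_nonneg r)
      have hb : r ^ 2 * r = z.im := by rw [← hr3]; ring
      have hcb : r ^ 2 * z.im ≤ B * z.im := mul_le_mul_of_nonneg_right hrB hz.le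
      have hzB1 : z.im ≤ B * z.im := by
        have : (0:ℝ) ≤ (B - 1) * z.im := mul_nonneg (by linarith) hz.le
        linarith
      have h1 : r ^ 2 * (z.im + t) ≤ 2 * B * z.im := by
        have : r ^ 2 * (z.im + t) = r ^ 2 * z.im + r ^ 2 * t := by ring
        linarith [ha, hb, hcb, hzB1]
      have h2 : ((1 - p) * (2 * B)) * (z.im + t) = 2 * B * z.im := by
        linear_combination (-2) * B * hpe
      have h3 : r ^ 2 / (2 * B) ≤ 1 - p := by
        rw [div_le_iff₀ (by positivity)]
        refine le_of_mul_le_mul_right ?_ (show (0:ℝ) < z.im + t by linarith)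
        calc r ^ 2 * (z.im + t) ≤ 2 * B * z.im := h1
          _ = ((1 - p) * (2 * B)) * (z.im + t) := h2.symm
      have h6 : (0:ℝ) ≤ 2 * (z.im + t) ^ 2 * q := by positivity
      linarith [h3, h6]
    · have h5 : r ^ 2 ≤ t ^ 2 := by
        have := mul_self_le_mul_self hrpos.le hc
        nlinarith [this]
      have hd : r ^ 2 / (2 * B) ≤ r ^ 2 := by
        rw [div_le_iff₀ (by positivity)]
        have h7 : (0:ℝ) ≤ (2 * B - 1) * r ^ 2 := mul_nonneg (by linarith) (sq_nonneg r)
        linarith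
      linarith [hq2, hp1, h5, hd, sq_nonneg r]
  have hre : r ^ 2 / (2 * B) ≤ ‖1 - D‖ := by
    refine le_trans ?_ (Complex.re_le_norm _)
    rw [Complex.sub_re, Complex.one_re]
    exact hkey
  have habsD1 : ‖D‖ ≤ 1 := le_trans hDabs hp1
  have h5 : ‖deriv s₀ z‖ * (r ^ 2 / (2 * B))
      ≤ ‖deriv s₀ z‖ * ‖1 - D‖ :=
    mul_le_mul_of_nonneg_left hre (norm_nonneg _)
  have h6 : ‖deriv s₀ z‖ * ‖1 - D‖ = ‖D‖ := by
    rw [← norm_mul, hprod]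
  have h7 : ‖deriv s₀ z‖ * (r ^ 2 / (2 * B)) ≤ 1 := by
    rw [h6] at h5
    exact le_trans h5 habsD1
  calc ‖deriv s₀ z‖ * r ^ 2
      = (‖deriv s₀ z‖ * (r ^ 2 / (2 * B))) * (2 * B) := by field_simp
    _ ≤ 1 * (2 * B) := mul_le_mul_of_nonneg_right h7 (by positivity)
    _ = 2 * B := one_mul _


lemma rpow_third_subadd (x y : ℝ) (hx : 0 ≤ x) (hy : 0 ≤ y) :
    (x + y) ^ ((1:ℝ)/3) ≤ x ^ ((1:ℝ)/3) + y ^ ((1:ℝ)/3) := by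
  have h := NNReal.rpow_add_le_add_rpow (x.toNNReal) (y.toNNReal)
    (by norm_num : (0:ℝ) ≤ 1/3) (by norm_num : (1:ℝ)/3 ≤ 1)
  rw [← Real.toNNReal_add hx hy] at h
  have h2 := NNReal.coe_le_coe.mpr h
  push_cast at h2
  rwa [Real.coe_toNNReal _ (by linarith), Real.coe_toNNReal _ hx, Real.coe_toNNReal _ hy] at h2

lemma deriv_bound' (μ : Measure ℝ) [IsProbabilityMeasure μ] (s₀ : ℂ → ℂ)
    (hs₀holo : DifferentiableOn ℂ s₀ {z : ℂ | 0 < z.im})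
    (hs₀ : ∀ z : ℂ, 0 < z.im → 0 < (s₀ z).im ∧ s₀ z = stieltjes μ (z + s₀ z))
    (B : ℝ) (hB : 1 ≤ B) (z : ℂ) (hz : 0 < z.im) (hzB : z.im ≤ B) :
    ‖deriv s₀ z‖ ≤ 2 * B / (z.im ^ ((1:ℝ)/3)) ^ 2 := by
  have h := deriv_bound μ s₀ hs₀holo hs₀ B hB z hz hzB
  have hp : (0:ℝ) < (z.im ^ ((1:ℝ)/3)) ^ 2 := by positivity
  rw [le_div_iff₀ hp]
  exact h

lemma vert_piece (μ : Measure ℝ) [IsProbabilityMeasure μ] (s₀ : ℂ → ℂ)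
    (hs₀holo : DifferentiableOn ℂ s₀ {z : ℂ | 0 < z.im})
    (hs₀ : ∀ z : ℂ, 0 < z.im → 0 < (s₀ z).im ∧ s₀ z = stieltjes μ (z + s₀ z))
    (B : ℝ) (hB : 1 ≤ B) (z : ℂ) (hz : 0 < z.im) (δ : ℝ) (hδ : 0 < δ)
    (hub : z.im + δ ≤ B) :
    ‖s₀ (z + δ * Complex.I) - s₀ z‖ ≤ 6 * B * δ ^ ((1:ℝ)/3) := by
  have hop : IsOpen {w : ℂ | 0 < w.im} := isOpen_lt continuous_const Complex.continuous_im
  have hcont : ContinuousOn (deriv s₀) {w : ℂ | 0 < w.im} :=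
    ((hs₀holo.analyticOnNhd hop).deriv).continuousOn
  have hBpos : (0:ℝ) < B := lt_of_lt_of_le one_pos hB
  set γ : ℝ → ℂ := fun τ => z + (τ:ℂ) * Complex.I with hγ
  have hγim : ∀ τ : ℝ, (γ τ).im = z.im + τ := by
    intro τ
    simp [hγ, Complex.add_im, Complex.mul_im]
  have hγc : Continuous γ := by
    apply continuous_const.add
    exact Complex.continuous_ofReal.mul continuous_const
  have hmem : ∀ τ ∈ Set.uIcc (0:ℝ) δ, 0 < (γ τ).im ∧ (γ τ).im ≤ B := by
    intro τ hτ
    rw [Set.uIcc_of_le hδ.le] at hτ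
    obtain ⟨h0, h1⟩ := hτ
    constructor
    · rw [hγim]; linarith
    · rw [hγim]; linarith
  have hγd : ∀ τ : ℝ, HasDerivAt γ Complex.I τ := by
    intro τ
    have h1 : HasDerivAt (fun y : ℝ => (y:ℂ)) 1 τ := (hasDerivAt_id τ).ofReal_comp
    have h2 := (h1.mul_const Complex.I).const_add z
    rw [one_mul] at h2
    exact h2
  have hderivs : ∀ τ ∈ Set.uIcc (0:ℝ) δ,
      HasDerivAt (fun τ => s₀ (γ τ)) (Complex.I • deriv s₀ (γ τ)) τ := by
    intro τ hτ
    have hmemτ := hmem τ hτ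
    have hda : DifferentiableAt ℂ s₀ (γ τ) :=
      hs₀holo.differentiableAt (hop.mem_nhds hmemτ.1)
    exact HasDerivAt.scomp τ hda.hasDerivAt (hγd τ)
  have hii : IntervalIntegrable (fun τ => Complex.I • deriv s₀ (γ τ)) volume 0 δ := by
    apply ContinuousOn.intervalIntegrable
    apply ContinuousOn.fun_const_smul
    exact hcont.comp hγc.continuousOn (fun τ hτ => (hmem τ hτ).1)
  have hFTC := intervalIntegral.integral_eq_sub_of_hasDerivAt hderivs hii
  -- the bound function
  set gb : ℝ → ℝ := fun τ => 2 * B / ((z.im + τ) ^ ((1:ℝ)/3)) ^ 2 with hgb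
  have hgbc : ContinuousOn gb (Set.uIcc (0:ℝ) δ) := by
    apply ContinuousOn.div continuousOn_const
    · apply ContinuousOn.pow
      apply ContinuousOn.rpow_const
      · exact (continuous_const.add continuous_id).continuousOn
      · intro τ hτ
        rw [Set.uIcc_of_le hδ.le] at hτ
        exact Or.inl (by simp; linarith [hτ.1])
    · intro τ hτ
      rw [Set.uIcc_of_le hδ.le] at hτ
      have : (0:ℝ) < z.im + τ := by linarith [hτ.1]
      positivity
  have hgbi : IntervalIntegrable gb volume 0 δ := hgbc.intervalIntegrable
  have hbound : ‖∫ τ in (0:ℝ)..δ, Complex.I • deriv s₀ (γ τ)‖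
      ≤ |∫ τ in (0:ℝ)..δ, gb τ| := by
    refine intervalIntegral.norm_integral_le_abs_of_norm_le
      ((ae_restrict_iff' measurableSet_uIoc).mpr (Filter.Eventually.of_forall fun τ hτ => ?_)) hgbi
    have hτ' : τ ∈ Set.uIcc (0:ℝ) δ := Set.uIoc_subset_uIcc hτ
    have hmemτ := hmem τ hτ'
    have h1 : ‖Complex.I • deriv s₀ (γ τ)‖ = ‖deriv s₀ (γ τ)‖ := by
      rw [norm_smul, Complex.norm_I, one_mul]
    rw [h1]
    have h2 := deriv_bound' μ s₀ hs₀holo hs₀ B hB (γ τ) hmemτ.1 hmemτ.2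
    rwa [hγim τ] at h2
  -- compute the integral of gb
  have hG : ∀ τ ∈ Set.uIcc (0:ℝ) δ,
      HasDerivAt (fun τ => 6 * B * (z.im + τ) ^ ((1:ℝ)/3)) (gb τ) τ := by
    intro τ hτ
    rw [Set.uIcc_of_le hδ.le] at hτ
    have hx : (0:ℝ) < z.im + τ := by linarith [hτ.1]
    have inner : HasDerivAt (fun τ : ℝ => z.im + τ) 1 τ := (hasDerivAt_id τ).const_add z.im
    have hpow := inner.rpow_const (p := (1:ℝ)/3) (Or.inl (ne_of_gt hx))
    have h3 := hpow.const_mul (6 * B)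
    refine h3.congr_deriv ?_
    symm
    have e1 : ((z.im + τ) ^ ((1:ℝ)/3)) ^ 2 = (z.im + τ) ^ ((2:ℝ)/3) := by
      rw [← Real.rpow_natCast ((z.im + τ) ^ ((1:ℝ)/3)) 2, ← Real.rpow_mul hx.le]
      norm_num
    have e2 : (z.im + τ) ^ ((1:ℝ)/3 - 1) = ((z.im + τ) ^ ((2:ℝ)/3))⁻¹ := by
      rw [← Real.rpow_neg hx.le]
      norm_num
    show 2 * B / ((z.im + τ) ^ ((1:ℝ)/3)) ^ 2
        = 6 * B * (1 * ((1:ℝ)/3) * (z.im + τ) ^ ((1:ℝ)/3 - 1))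
    rw [e1, e2]
    field_simp
    ring
  have hint2 := intervalIntegral.integral_eq_sub_of_hasDerivAt hG hgbi
  have hval : ∫ τ in (0:ℝ)..δ, gb τ
      = 6 * B * (z.im + δ) ^ ((1:ℝ)/3) - 6 * B * (z.im + 0) ^ ((1:ℝ)/3) := hint2
  have hmono : z.im ^ ((1:ℝ)/3) ≤ (z.im + δ) ^ ((1:ℝ)/3) :=
    Real.rpow_le_rpow hz.le (by linarith) (by norm_num)
  have hsub : (z.im + δ) ^ ((1:ℝ)/3) ≤ z.im ^ ((1:ℝ)/3) + δ ^ ((1:ℝ)/3) :=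
    rpow_third_subadd z.im δ hz.le hδ.le
  have hfin : |∫ τ in (0:ℝ)..δ, gb τ| ≤ 6 * B * δ ^ ((1:ℝ)/3) := by
    rw [hval]
    rw [add_zero]
    rw [_root_.abs_of_nonneg (by nlinarith [hmono, hBpos])]
    nlinarith [hsub, hBpos]
  have hγ0 : γ 0 = z := by simp [hγ]
  have hend : s₀ (z + (δ:ℂ) * Complex.I) - s₀ z = ∫ τ in (0:ℝ)..δ, Complex.I • deriv s₀ (γ τ) := by
    rw [hFTC, hγ0]
  rw [hend]
  exact le_trans hbound hfin


lemma horiz_piece (μ : Measure ℝ) [IsProbabilityMeasure μ] (s₀ : ℂ → ℂ)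
    (hs₀holo : DifferentiableOn ℂ s₀ {z : ℂ | 0 < z.im})
    (hs₀ : ∀ z : ℂ, 0 < z.im → 0 < (s₀ z).im ∧ s₀ z = stieltjes μ (z + s₀ z))
    (B : ℝ) (hB : 1 ≤ B) (p v : ℂ) (hv : 0 < ‖v‖)
    (hcond : ∀ τ ∈ Set.Icc (0:ℝ) 1,
      ‖v‖ ≤ (p + (τ:ℂ) * v).im ∧ (p + (τ:ℂ) * v).im ≤ B) :
    ‖s₀ (p + v) - s₀ p‖ ≤ 2 * B * (‖v‖) ^ ((1:ℝ)/3) := by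
  have hop : IsOpen {w : ℂ | 0 < w.im} := isOpen_lt continuous_const Complex.continuous_im
  have hcont : ContinuousOn (deriv s₀) {w : ℂ | 0 < w.im} :=
    ((hs₀holo.analyticOnNhd hop).deriv).continuousOn
  have hBpos : (0:ℝ) < B := lt_of_lt_of_le one_pos hB
  set γ : ℝ → ℂ := fun τ => p + (τ:ℂ) * v with hγ
  have hγc : Continuous γ := by
    apply continuous_const.add
    exact Complex.continuous_ofReal.mul continuous_const
  have hmem : ∀ τ ∈ Set.uIcc (0:ℝ) 1, 0 < (γ τ).im ∧ (γ τ).im ≤ B := by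
    intro τ hτ
    rw [Set.uIcc_of_le zero_le_one] at hτ
    obtain ⟨h1, h2⟩ := hcond τ hτ
    exact ⟨lt_of_lt_of_le hv h1, h2⟩
  have hγd : ∀ τ : ℝ, HasDerivAt γ v τ := by
    intro τ
    have h1 : HasDerivAt (fun y : ℝ => (y:ℂ)) 1 τ := (hasDerivAt_id τ).ofReal_comp
    have h2 := (h1.mul_const v).const_add p
    rw [one_mul] at h2
    exact h2
  have hderivs : ∀ τ ∈ Set.uIcc (0:ℝ) 1,
      HasDerivAt (fun τ => s₀ (γ τ)) (v • deriv s₀ (γ τ)) τ := by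
    intro τ hτ
    have hmemτ := hmem τ hτ
    have hda : DifferentiableAt ℂ s₀ (γ τ) :=
      hs₀holo.differentiableAt (hop.mem_nhds hmemτ.1)
    exact HasDerivAt.scomp τ hda.hasDerivAt (hγd τ)
  have hii : IntervalIntegrable (fun τ => v • deriv s₀ (γ τ)) volume 0 1 := by
    apply ContinuousOn.intervalIntegrable
    apply ContinuousOn.fun_const_smul
    exact hcont.comp hγc.continuousOn (fun τ hτ => (hmem τ hτ).1)
  have hFTC := intervalIntegral.integral_eq_sub_of_hasDerivAt hderivs hii
  set ρ := (‖v‖) ^ ((1:ℝ)/3) with hρ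
  have hρpos : 0 < ρ := Real.rpow_pos_of_pos hv _
  have hρ3 : ρ ^ 3 = ‖v‖ := by
    rw [hρ, ← Real.rpow_natCast ((‖v‖) ^ ((1:ℝ)/3)) 3, ← Real.rpow_mul hv.le]
    norm_num
  have hptbound : ∀ τ ∈ Set.uIoc (0:ℝ) 1, ‖v • deriv s₀ (γ τ)‖ ≤ 2 * B * ρ := by
    intro τ hτ
    have hτ' : τ ∈ Set.uIcc (0:ℝ) 1 := Set.uIoc_subset_uIcc hτ
    have hmemτ := hmem τ hτ'
    have hτ'' : τ ∈ Set.Icc (0:ℝ) 1 := by rwa [Set.uIcc_of_le zero_le_one] at hτ'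
    have hlow := (hcond τ hτ'').1
    have habsd := deriv_bound' μ s₀ hs₀holo hs₀ B hB (γ τ) hmemτ.1 hmemτ.2
    have hmono2 : ρ ^ 2 ≤ ((γ τ).im ^ ((1:ℝ)/3)) ^ 2 := by
      apply pow_le_pow_left₀ hρpos.le
      exact Real.rpow_le_rpow (norm_nonneg _) hlow (by norm_num)
    have hdiv : 2 * B / ((γ τ).im ^ ((1:ℝ)/3)) ^ 2 ≤ 2 * B / ρ ^ 2 := by
      gcongr
    have h1 : ‖v • deriv s₀ (γ τ)‖ = ‖v‖ * ‖deriv s₀ (γ τ)‖ := by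
      rw [norm_smul]
    rw [h1]
    calc ‖v‖ * ‖deriv s₀ (γ τ)‖
        ≤ ‖v‖ * (2 * B / ρ ^ 2) := by
          apply mul_le_mul_of_nonneg_left (le_trans habsd hdiv) (norm_nonneg _)
      _ = 2 * B * ρ := by
          rw [← hρ3]
          field_simp
  have hbound : ‖∫ τ in (0:ℝ)..1, v • deriv s₀ (γ τ)‖
      ≤ |∫ τ in (0:ℝ)..1, (2 * B * ρ)| := by
    refine intervalIntegral.norm_integral_le_abs_of_norm_le
      ((ae_restrict_iff' measurableSet_uIoc).mpr
        (Filter.Eventually.of_forall fun τ hτ => hptbound τ hτ)) ?_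
    exact intervalIntegrable_const
  have hval : |∫ τ in (0:ℝ)..1, (2 * B * ρ : ℝ)| = 2 * B * ρ := by
    rw [intervalIntegral.integral_const]
    simp
    rw [abs_of_pos hBpos, abs_of_pos hρpos]
  have hγ0 : γ 0 = p := by simp [hγ]
  have hγ1 : γ 1 = p + v := by simp [hγ]
  have hend : s₀ (p + v) - s₀ p = ∫ τ in (0:ℝ)..1, v • deriv s₀ (γ τ) := by
    rw [hFTC, hγ0, hγ1]
  rw [hend]
  rw [hval] at hbound
  exact hbound

end HolderS0Aux

open HolderS0Aux in
set_option maxHeartbeats 1000000 in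
theorem holder_continuity_s0
    (μ : Measure ℝ) [IsProbabilityMeasure μ]
    (a b : ℝ) (hsupp : μ (Set.Icc a b)ᶜ = 0)
    (s₀ : ℂ → ℂ)
    (hs₀holo : DifferentiableOn ℂ s₀ {z : ℂ | 0 < z.im})
    (hs₀ : ∀ z : ℂ, 0 < z.im → 0 < (s₀ z).im ∧ s₀ z = stieltjes μ (z + s₀ z))
    (R : ℝ) (hR : 0 < R) :
    ∃ C : ℝ, 0 < C ∧ ∀ z z' : ℂ, 0 < z.im → 0 < z'.im →
      ‖z‖ ≤ R → ‖z'‖ ≤ R →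
      ‖s₀ z - s₀ z'‖ ≤ C * ‖z - z'‖ ^ ((1 : ℝ) / 3) := by
  set B := max (3 * R) 1 with hBdef
  have hB1 : 1 ≤ B := le_max_right _ _
  have h3R : 3 * R ≤ B := le_max_left _ _
  have hBpos : (0:ℝ) < B := lt_of_lt_of_le one_pos hB1
  refine ⟨14 * B, by positivity, ?_⟩
  intro z z' hz hz' hzR hz'R
  rcases eq_or_ne z z' with rfl | hne
  · rw [sub_self, norm_zero, sub_self, norm_zero, Real.zero_rpow (by norm_num), mul_zero]
  · set δ := ‖z - z'‖ with hδdef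
    have hδ : 0 < δ := by rw [hδdef]; exact norm_pos_iff.mpr (sub_ne_zero.mpr hne)
    have hδ2R : δ ≤ 2 * R := by
      have h := norm_sub_le z z'
      rw [hδdef]
      linarith [h, hzR, hz'R]
    have hzim : z.im ≤ R := le_trans (le_trans (le_abs_self _) (Complex.abs_im_le_norm z)) hzR
    have hz'im : z'.im ≤ R := le_trans (le_trans (le_abs_self _) (Complex.abs_im_le_norm z')) hz'R
    have hv1 := vert_piece μ s₀ hs₀holo hs₀ B hB1 z hz δ hδ (by linarith)
    have hv2 := vert_piece μ s₀ hs₀holo hs₀ B hB1 z' hz' δ hδ (by linarith)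
    have habsv : ‖z' - z‖ = δ := by rw [hδdef, norm_sub_rev]
    have hcond : ∀ τ ∈ Set.Icc (0:ℝ) 1,
        ‖z' - z‖ ≤ ((z + (δ:ℂ) * Complex.I) + (τ:ℂ) * (z' - z)).im ∧
        ((z + (δ:ℂ) * Complex.I) + (τ:ℂ) * (z' - z)).im ≤ B := by
      intro τ hτ
      have him : ((z + (δ:ℂ) * Complex.I) + (τ:ℂ) * (z' - z)).im
          = z.im + δ + τ * (z'.im - z.im) := by
        simp [Complex.add_im, Complex.mul_im, Complex.sub_im, Complex.sub_re]
      have ht0 : (0:ℝ) ≤ τ := hτ.1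
      have ht1 : τ ≤ 1 := hτ.2
      have hn1 : (0:ℝ) ≤ (1 - τ) * z.im := mul_nonneg (by linarith) hz.le
      have hn2 : (0:ℝ) ≤ τ * z'.im := mul_nonneg ht0 hz'.le
      have hu1 : (1 - τ) * z.im ≤ (1 - τ) * R := mul_le_mul_of_nonneg_left hzim (by linarith)
      have hu2 : τ * z'.im ≤ τ * R := mul_le_mul_of_nonneg_left hz'im ht0
      constructor
      · rw [habsv, him]
        nlinarith [hn1, hn2]
      · rw [him]
        nlinarith [hu1, hu2, hδ2R, h3R]
    have hh := horiz_piece μ s₀ hs₀holo hs₀ B hB1 (z + (δ:ℂ) * Complex.I) (z' - z)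
      (by rw [habsv]; exact hδ) hcond
    have hplus : (z + (δ:ℂ) * Complex.I) + (z' - z) = z' + (δ:ℂ) * Complex.I := by ring
    rw [hplus, habsv] at hh
    have tri1 : ‖s₀ z - s₀ z'‖
        ≤ ‖s₀ z - s₀ (z + (δ:ℂ) * Complex.I)‖
          + ‖s₀ (z + (δ:ℂ) * Complex.I) - s₀ z'‖ :=
      norm_sub_le_norm_sub_add_norm_sub _ _ _
    have tri2 : ‖s₀ (z + (δ:ℂ) * Complex.I) - s₀ z'‖
        ≤ ‖s₀ (z + (δ:ℂ) * Complex.I) - s₀ (z' + (δ:ℂ) * Complex.I)‖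
          + ‖s₀ (z' + (δ:ℂ) * Complex.I) - s₀ z'‖ :=
      norm_sub_le_norm_sub_add_norm_sub _ _ _
    have e1 : ‖s₀ z - s₀ (z + (δ:ℂ) * Complex.I)‖
        = ‖s₀ (z + (δ:ℂ) * Complex.I) - s₀ z‖ := norm_sub_rev _ _
    have e2 : ‖s₀ (z + (δ:ℂ) * Complex.I) - s₀ (z' + (δ:ℂ) * Complex.I)‖
        = ‖s₀ (z' + (δ:ℂ) * Complex.I) - s₀ (z + (δ:ℂ) * Complex.I)‖ :=
      norm_sub_rev _ _
    rw [e1] at tri1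
    rw [e2] at tri2
    linarith [tri1, tri2, hv1, hv2, hh]
end

section
/- Let A_n be an n × n Hermitian matrix written in block form with top-left (n-1) × (n-1) minor A_{n-1}, rightmost column X ∈ ℂ^{n-1} (with the bottom entry a_{nn} ∈ ℝ removed). Suppose λ_i(A_n) is an eigenvalue of A_n that is not an eigenvalue of A_{n-1}, and that X is not orthogonal to any unit eigenvector u_j(A_{n-1}) of A_{n-1}. Then ∑_{j=1}^{n-1} |u_j(A_{n-1})* X|² / (λ_j(A_{n-1}) - λ_i(A_n)) = a_{nn} - λ_i(A_n). -/
open Matrix BigOperators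

theorem interlacing_identity
    (n : ℕ) (hn : 0 < n)
    (A : Matrix (Fin (n + 1)) (Fin (n + 1)) ℂ) (hA : A.IsHermitian)
    (hA' : (A.submatrix (Fin.castSucc) (Fin.castSucc)).IsHermitian)
    (X : Fin n → ℂ) (hX : X = fun j => A (Fin.castSucc j) (Fin.last n))
    (i : Fin (n + 1))
    (hsep : ∀ j : Fin n, hA'.eigenvalues j ≠ hA.eigenvalues i)
    (horth : ∀ j : Fin n,
      (∑ k, (starRingEnd ℂ) (hA'.eigenvectorBasis j k) * X k) ≠ 0) :
    (∑ j : Fin n,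
        ‖∑ k, (starRingEnd ℂ) (hA'.eigenvectorBasis j k) * X k‖ ^ 2
          / (hA'.eigenvalues j - hA.eigenvalues i))
      = (A (Fin.last n) (Fin.last n)).re - hA.eigenvalues i := by
  classical
  set u : Fin n → Fin n → ℂ := fun j => hA'.eigenvectorBasis j with hu
  set lam : ℝ := hA.eigenvalues i with hlam
  set μ : Fin n → ℝ := hA'.eigenvalues with hμ
  set v : Fin (n+1) → ℂ := fun l => hA.eigenvectorBasis i l with hv
  set w : Fin n → ℂ := fun k => v (Fin.castSucc k) with hw
  set c : ℂ := v (Fin.last n) with hc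
  set cj : Fin n → ℂ := fun j => ∑ k, (starRingEnd ℂ) (u j k) * X k with hcj
  set dj : Fin n → ℂ := fun j => ∑ k, (starRingEnd ℂ) (u j k) * w k with hdj
  -- completeness relation
  have hUU : (hA'.eigenvectorUnitary : Matrix (Fin n) (Fin n) ℂ) *
      star (hA'.eigenvectorUnitary : Matrix (Fin n) (Fin n) ℂ) = 1 :=
    (Unitary.mem_iff.mp hA'.eigenvectorUnitary.2).2
  have hcomp : ∀ k m : Fin n,
      (∑ j, u j k * (starRingEnd ℂ) (u j m)) = if k = m then 1 else 0 := by
    intro k m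
    have h := congrFun (congrFun hUU k) m
    simpa [Matrix.mul_apply, Matrix.one_apply, Matrix.star_apply,
      Matrix.IsHermitian.eigenvectorUnitary_apply, hu] using h
  -- eigen equation for A
  have hAv : ∀ l, (∑ m, A l m * v m) = (lam : ℂ) * v l := by
    intro l
    have h := congrFun (hA.mulVec_eigenvectorBasis i) l
    simpa [Matrix.mulVec, dotProduct, Pi.smul_apply, Complex.real_smul,
      hv, hlam] using h
  -- eigen equation for the minor
  have hBu : ∀ j m, (∑ k, A (Fin.castSucc m) (Fin.castSucc k) * u j k)
      = (μ j : ℂ) * u j m := by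
    intro j m
    have h := congrFun (hA'.mulVec_eigenvectorBasis j) m
    simpa [Matrix.mulVec, dotProduct, Matrix.submatrix_apply,
      Pi.smul_apply, Complex.real_smul, hu, hμ] using h
  -- block equation 1
  have heq1 : ∀ k : Fin n,
      (∑ m, A (Fin.castSucc k) (Fin.castSucc m) * w m) + X k * c
        = (lam : ℂ) * w k := by
    intro k
    have h := hAv (Fin.castSucc k)
    rw [Fin.sum_univ_castSucc] at h
    simpa [hX, hw, hc] using h
  -- block equation 2
  have hconjX : ∀ k : Fin n, A (Fin.last n) (Fin.castSucc k) = (starRingEnd ℂ) (X k) := by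
    intro k
    rw [hX, starRingEnd_apply]
    exact (hA.apply (Fin.last n) (Fin.castSucc k)).symm
  have heq2 : (∑ k, (starRingEnd ℂ) (X k) * w k) + A (Fin.last n) (Fin.last n) * c
      = (lam : ℂ) * c := by
    have h := hAv (Fin.last n)
    rw [Fin.sum_univ_castSucc] at h
    simp only [hconjX] at h
    simpa [hw, hc] using h
  -- d_j relation
  have hdjrel : ∀ j, ((lam : ℂ) - μ j) * dj j = c * cj j := by
    intro j
    have h : ∑ k, (starRingEnd ℂ) (u j k) *
        ((∑ m, A (Fin.castSucc k) (Fin.castSucc m) * w m) + X k * c)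
        = ∑ k, (starRingEnd ℂ) (u j k) * ((lam : ℂ) * w k) := by
      exact Finset.sum_congr rfl fun k _ => by rw [heq1 k]
    have hfirst : ∑ k, (starRingEnd ℂ) (u j k) *
        (∑ m, A (Fin.castSucc k) (Fin.castSucc m) * w m)
        = (μ j : ℂ) * dj j := by
      calc ∑ k, (starRingEnd ℂ) (u j k) * (∑ m, A (Fin.castSucc k) (Fin.castSucc m) * w m)
          = ∑ m, (∑ k, (starRingEnd ℂ) (u j k) * A (Fin.castSucc k) (Fin.castSucc m)) * w m := by
            simp only [Finset.mul_sum, Finset.sum_mul]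
            rw [Finset.sum_comm]
            exact Finset.sum_congr rfl fun m _ => Finset.sum_congr rfl fun k _ => by ring
        _ = ∑ m, ((μ j : ℂ) * (starRingEnd ℂ) (u j m)) * w m := by
            refine Finset.sum_congr rfl fun m _ => ?_
            congr 1
            have hAconj : ∀ k, (starRingEnd ℂ) (A (Fin.castSucc m) (Fin.castSucc k))
                = A (Fin.castSucc k) (Fin.castSucc m) := fun k => by
              rw [starRingEnd_apply]; exact hA.apply _ _
            have : ∑ k, (starRingEnd ℂ) (u j k) * A (Fin.castSucc k) (Fin.castSucc m)
                = (starRingEnd ℂ) (∑ k, A (Fin.castSucc m) (Fin.castSucc k) * u j k) := by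
              rw [_root_.map_sum]
              refine Finset.sum_congr rfl fun k _ => ?_
              rw [_root_.map_mul, hAconj k, mul_comm]
            rw [this, hBu j m, _root_.map_mul, Complex.conj_ofReal]
        _ = (μ j : ℂ) * dj j := by
            rw [hdj, Finset.mul_sum]
            exact Finset.sum_congr rfl fun m _ => by ring
    simp only [mul_add] at h
    rw [Finset.sum_add_distrib] at h
    rw [hfirst] at h
    have h2 : (∑ k, (starRingEnd ℂ) (u j k) * (X k * c)) = cj j * c := by
      rw [hcj, Finset.sum_mul]
      exact Finset.sum_congr rfl fun k _ => by ring
    have h3 : (∑ k, (starRingEnd ℂ) (u j k) * ((lam : ℂ) * w k)) = (lam : ℂ) * dj j := by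
      rw [hdj, Finset.mul_sum]
      exact Finset.sum_congr rfl fun k _ => by ring
    rw [h2, h3] at h
    linear_combination -h
  have hdenom : ∀ j, ((lam : ℂ) - μ j) ≠ 0 := by
    intro j h
    apply hsep j
    have : (μ j : ℂ) = (lam : ℂ) := by linear_combination -h
    exact_mod_cast this
  have hdjval : ∀ j, dj j = c * cj j / ((lam : ℂ) - μ j) := by
    intro j
    rw [eq_div_iff (hdenom j)]
    linear_combination hdjrel j
  -- expansion of w in the eigenbasis (pointwise)
  have hwexp : ∀ k, w k = ∑ j, dj j * u j k := by
    intro k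
    calc w k = ∑ m, (if k = m then 1 else 0) * w m := by simp
      _ = ∑ m, (∑ j, u j k * (starRingEnd ℂ) (u j m)) * w m := by
          refine Finset.sum_congr rfl fun m _ => by rw [hcomp]
      _ = ∑ j, dj j * u j k := by
          simp only [Finset.sum_mul, hdj, Finset.mul_sum]
          rw [Finset.sum_comm]
          exact Finset.sum_congr rfl fun j _ => Finset.sum_congr rfl fun m _ => by ring
  -- c ≠ 0
  have hc0 : c ≠ 0 := by
    intro h0
    have hdj0 : ∀ j, dj j = 0 := by
      intro j; rw [hdjval j, h0]; simp
    have hw0 : ∀ k, w k = 0 := by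
      intro k; rw [hwexp k]; simp [hdj0]
    have hv0 : hA.eigenvectorBasis i = 0 := by
      ext l
      refine Fin.lastCases ?_ ?_ l
      · simpa [hv, hc] using h0
      · intro m; simpa [hv, hw] using hw0 m
    exact hA.eigenvectorBasis.orthonormal.ne_zero i hv0
  -- key complex identity
  have hcjc : ∀ j, (starRingEnd ℂ) (cj j) = ∑ k, u j k * (starRingEnd ℂ) (X k) := by
    intro j
    rw [hcj]
    rw [_root_.map_sum]
    refine Finset.sum_congr rfl fun k _ => ?_
    rw [_root_.map_mul, Complex.conj_conj]
  have hXw : (∑ k, (starRingEnd ℂ) (X k) * w k) = ∑ j, dj j * (starRingEnd ℂ) (cj j) := by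
    calc (∑ k, (starRingEnd ℂ) (X k) * w k)
        = ∑ k, ∑ j, dj j * (u j k * (starRingEnd ℂ) (X k)) := by
          refine Finset.sum_congr rfl fun k _ => ?_
          rw [hwexp k, Finset.mul_sum]
          exact Finset.sum_congr rfl fun j _ => by ring
      _ = ∑ j, dj j * (starRingEnd ℂ) (cj j) := by
          rw [Finset.sum_comm]
          refine Finset.sum_congr rfl fun j _ => ?_
          rw [hcjc j, Finset.mul_sum]
  have hkey : (∑ j, cj j * (starRingEnd ℂ) (cj j) / ((μ j : ℂ) - lam))
      = A (Fin.last n) (Fin.last n) - lam := by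
    have h : c * (∑ j, cj j * (starRingEnd ℂ) (cj j) / ((μ j : ℂ) - lam))
        = c * (A (Fin.last n) (Fin.last n) - lam) := by
      have hL : (∑ j, dj j * (starRingEnd ℂ) (cj j))
          = ∑ j, c * (cj j * (starRingEnd ℂ) (cj j) / ((lam : ℂ) - μ j)) := by
        refine Finset.sum_congr rfl fun j _ => ?_
        rw [hdjval j]
        ring
      have h2 := heq2
      rw [hXw, hL] at h2
      rw [← Finset.mul_sum] at h2
      have hneg : ∀ j, cj j * (starRingEnd ℂ) (cj j) / ((μ j : ℂ) - lam)
          = -(cj j * (starRingEnd ℂ) (cj j) / ((lam : ℂ) - μ j)) := by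
        intro j
        rw [show ((μ j : ℂ) - lam) = -((lam : ℂ) - μ j) by ring, div_neg]
      simp only [hneg]
      rw [Finset.sum_neg_distrib]
      linear_combination -h2
    exact mul_left_cancel₀ hc0 h
  -- conclude over the reals
  apply Complex.ofReal_injective
  calc ((∑ j : Fin n, ‖∑ k, (starRingEnd ℂ) (hA'.eigenvectorBasis j k) * X k‖ ^ 2
          / (μ j - lam) : ℝ) : ℂ)
      = ∑ j, cj j * (starRingEnd ℂ) (cj j) / ((μ j : ℂ) - lam) := by
        push_cast
        refine Finset.sum_congr rfl fun j _ => ?_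
        rw [Complex.mul_conj, Complex.normSq_eq_norm_sq, Complex.ofReal_pow]
    _ = A (Fin.last n) (Fin.last n) - (lam : ℂ) := hkey
    _ = (((A (Fin.last n) (Fin.last n)).re - lam : ℝ) : ℂ) := by
        have hreal : (↑(A (Fin.last n) (Fin.last n)).re : ℂ) = A (Fin.last n) (Fin.last n) :=
          Complex.conj_eq_iff_re.mp (by rw [starRingEnd_apply]; exact hA.apply _ _)
        rw [Complex.ofReal_sub, hreal]
end

section
/- Let A_n be an n × n Hermitian matrix in block form with (1,1) entry a ∈ ℝ, first column remainder X ∈ ℂ^{n-1}, and bottom-right (n-1) × (n-1) minor A_{n-1}. Let (x, v) with x ∈ ℂ, v ∈ ℂ^{n-1} be a unit eigenvector of A_n with eigenvalue λ_i(A_n), and suppose no eigenvalue of A_{n-1} equals λ_i(A_n). Then |x|² = 1 / (1 + ∑_{j=1}^{n-1} (λ_j(A_{n-1}) - λ_i(A_n))^{-2} |u_j(A_{n-1})* X|²), where u_j(A_{n-1}) are orthonormal eigenvectors of A_{n-1}. -/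
open Matrix BigOperators

theorem eigenvector_first_coordinate
    (n : ℕ) (hn : 0 < n)
    (A : Matrix (Fin (n + 1)) (Fin (n + 1)) ℂ) (hA : A.IsHermitian)
    (hA₁ : (A.submatrix (Fin.succ) (Fin.succ)).IsHermitian)
    (X : Fin n → ℂ) (hX : X = fun j => A (Fin.succ j) 0)
    (t : ℝ) (v : Fin (n + 1) → ℂ)
    (hev : A.mulVec v = (t : ℂ) • v)
    (hunit : ∑ i, ‖v i‖ ^ 2 = 1)
    (hsep : ∀ j : Fin n, hA₁.eigenvalues j ≠ t) :
    ‖v 0‖ ^ 2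
      = 1 / (1 + ∑ j : Fin n,
          (hA₁.eigenvalues j - t)⁻¹ ^ 2 *
            ‖∑ k, (starRingEnd ℂ) (hA₁.eigenvectorBasis j k) * X k‖ ^ 2) := by
  set B := A.submatrix (Fin.succ) (Fin.succ) with hB
  set μ := hA₁.eigenvalues with hμ
  set u := hA₁.eigenvectorBasis with hu
  set w : EuclideanSpace ℂ (Fin n) := WithLp.toLp 2 (fun i => v i.succ) with hw
  -- the lower block equation
  have hBw : ∀ i : Fin n, (B *ᵥ w) i = (t : ℂ) * w i - v 0 * X i := by
    intro i
    have h := congrFun hev i.succ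
    subst hX
    simp only [Matrix.mulVec, dotProduct, Fin.sum_univ_succ, Pi.smul_apply,
      smul_eq_mul] at h ⊢
    simp only [hB, Matrix.submatrix_apply, hw]
    linear_combination h
  -- project the block equation onto the eigenbasis
  have key := hA₁.mulVec_eigenvectorBasis
  set c : Fin n → ℂ := fun j => (inner ℂ (u j) w : ℂ) with hc0
  set d : Fin n → ℂ := fun j => ∑ k, (starRingEnd ℂ) (u j k) * X k with hd0
  have h3 : ∀ j, c j = ∑ i, (starRingEnd ℂ) (u j i) * w i := by
    intro j
    simp [hc0, PiLp.inner_apply, RCLike.inner_apply, mul_comm]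
  have hc : ∀ j : Fin n, (((μ j : ℂ)) - (t : ℂ)) * c j = -(v 0) * d j := by
    intro j
    have expand : (μ j : ℂ) * c j = ∑ i, (starRingEnd ℂ) ((B *ᵥ ⇑(u j)) i) * w i := by
      rw [key j, h3]
      simp only [Pi.smul_apply, Complex.real_smul, _root_.map_mul, Complex.conj_ofReal,
        Finset.mul_sum]
      exact Finset.sum_congr rfl fun i _ => by ring
    have expand2 : ∑ i, (starRingEnd ℂ) ((B *ᵥ ⇑(u j)) i) * w i
        = ∑ k, (starRingEnd ℂ) (u j k) * ((B *ᵥ w) k) := by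
      simp only [Matrix.mulVec, dotProduct, map_sum, Finset.sum_mul, Finset.mul_sum,
        _root_.map_mul]
      rw [Finset.sum_comm]
      refine Finset.sum_congr rfl fun k _ => Finset.sum_congr rfl fun i _ => ?_
      rw [starRingEnd_apply, hA₁.apply k i]
      ring
    have h4 : ∑ k, (starRingEnd ℂ) (u j k) * ((B *ᵥ w) k)
        = (t : ℂ) * c j - v 0 * d j := by
      rw [h3, hd0]
      simp only [hBw, Finset.mul_sum]
      rw [← Finset.sum_sub_distrib]
      exact Finset.sum_congr rfl fun k _ => by ring
    rw [sub_mul, expand, expand2, h4]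
    ring
  -- Parseval
  have hpar : ∑ j, ‖c j‖ ^ 2 = ∑ i : Fin n, ‖w i‖ ^ 2 := by
    calc ∑ j, ‖c j‖ ^ 2 = ∑ j, ‖u.repr w j‖ ^ 2 := by
          simp [hc0, OrthonormalBasis.repr_apply_apply]
      _ = ‖u.repr w‖ ^ 2 := (PiLp.norm_sq_eq_of_L2 _ _).symm
      _ = ‖w‖ ^ 2 := by rw [LinearIsometryEquiv.norm_map]
      _ = ∑ i, ‖w i‖ ^ 2 := PiLp.norm_sq_eq_of_L2 _ _
      _ = ∑ i, ‖w i‖ ^ 2 := by simp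
  -- size of each coefficient
  have habs : ∀ j, ‖c j‖ ^ 2
      = (μ j - t)⁻¹ ^ 2 * (‖v 0‖ ^ 2 * ‖d j‖ ^ 2) := by
    intro j
    have hne : μ j - t ≠ 0 := sub_ne_zero.mpr (hsep j)
    have hcast : ((μ j : ℂ) - (t : ℂ)) = ((μ j - t : ℝ) : ℂ) := by push_cast; ring
    have h5 : |μ j - t| * ‖c j‖ = ‖v 0‖ * ‖d j‖ := by
      have h5' := congrArg norm (hc j)
      rw [hcast, norm_mul, norm_mul, Complex.norm_real, Real.norm_eq_abs, norm_neg] at h5'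
      exact h5'
    have h7 : (μ j - t) ^ 2 * ‖c j‖ ^ 2
        = ‖v 0‖ ^ 2 * ‖d j‖ ^ 2 := by
      have h6 := congrArg (fun x => x ^ 2) h5
      simpa [mul_pow, sq_abs] using h6
    rw [← h7, ← mul_assoc, ← mul_pow, inv_mul_cancel₀ hne, one_pow, one_mul]
  -- combine
  set S := ∑ j, (μ j - t)⁻¹ ^ 2 * ‖d j‖ ^ 2 with hS0
  have hsum : ∑ i : Fin n, ‖w i‖ ^ 2 = ‖v 0‖ ^ 2 * S := by
    rw [← hpar, hS0, Finset.mul_sum]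
    exact Finset.sum_congr rfl fun j _ => by rw [habs j]; ring
  have hSnn : 0 ≤ S := Finset.sum_nonneg fun j _ => by positivity
  have hunit' : ‖v 0‖ ^ 2 * (1 + S) = 1 := by
    rw [Fin.sum_univ_succ] at hunit
    have hww : ∑ i : Fin n, ‖v i.succ‖ ^ 2 = ∑ i : Fin n, ‖w i‖ ^ 2 := rfl
    rw [hww, hsum] at hunit
    linarith [hunit]
  rw [eq_div_iff (by positivity : (1 : ℝ) + S ≠ 0)]
  exact hunit'
end

section
/- Let μ be a compactly supported probability measure and suppose s satisfies s = m_μ(z + s) + O(ε) with |z| ≤ R and Im(s) ≥ 0, Im(z) > 0, where ε ≤ 1. If μ is supported in [−b, b], then |s| ≤ max(C, 4b + 4R + 2) for an absolute constant C; in particular s = O_{R,μ}(1). -/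
open MeasureTheory

theorem apriori_bound :
    ∃ C : ℝ, 0 < C ∧
      ∀ (μ : Measure ℝ), IsProbabilityMeasure μ →
        ∀ (b R : ℝ) (z s : ℂ) (ε : ℝ),
          0 < b → μ (Set.Icc (-b) b)ᶜ = 0 →
          0 < R → ‖z‖ ≤ R → 0 < z.im → 0 ≤ s.im →
          0 < ε → ε ≤ 1 →
          ‖s - stieltjes μ (z + s)‖ ≤ ε →
          ‖s‖ ≤ max C (4 * b + 4 * R + 2) := by
  refine ⟨1, one_pos, ?_⟩
  intro μ hμ b R z s ε hb hsupp hR hzR hzim hsim hε hε1 hclose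
  by_contra hlt
  push_neg at hlt
  set K := ‖s‖ with hKdef
  have hmax : 4 * b + 4 * R + 2 < K := lt_of_le_of_lt (le_max_right _ _) hlt
  have hK2 : (2 : ℝ) < K := by linarith
  have hKRb : (2 : ℝ) ≤ K - R - b := by linarith
  have hKRb0 : (0 : ℝ) < K - R - b := by linarith
  -- a.e. x is in [-b, b]
  have hae : ∀ᵐ x ∂μ, x ∈ Set.Icc (-b) b := mem_ae_iff.mpr hsupp
  -- pointwise bound
  have hbound : ∀ᵐ (x : ℝ) ∂μ, ‖((x : ℂ) - (z + s))⁻¹‖ ≤ (K - R - b)⁻¹ := by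
    filter_upwards [hae] with x hx
    have hxb : ‖(x : ℂ)‖ ≤ b := by
      rw [Complex.norm_real, Real.norm_eq_abs]
      exact abs_le.mpr ⟨hx.1, hx.2⟩
    have h1 : ‖s‖ - ‖z‖ ≤ ‖z + s‖ := by
      have := norm_sub_norm_le s (-z)
      simp only [sub_neg_eq_add, norm_neg] at this
      calc ‖s‖ - ‖z‖ ≤ ‖s + z‖ := this
        _ = ‖z + s‖ := by rw [add_comm]
    have h2 : ‖z + s‖ - ‖(x : ℂ)‖ ≤ ‖(x : ℂ) - (z + s)‖ := by
      rw [norm_sub_rev]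
      exact norm_sub_norm_le _ _
    have hdist : K - R - b ≤ ‖(x : ℂ) - (z + s)‖ := by
      have hxb' : ‖(x : ℂ)‖ ≤ b := hxb
      have hzR' : ‖z‖ ≤ R := hzR
      have hKs : ‖s‖ = K := rfl
      have : K - R - b ≤ ‖(x : ℂ) - (z + s)‖ := by linarith
      simpa using this
    rw [norm_inv]
    exact inv_anti₀ hKRb0 (by simpa using hdist)
  have hm : ‖stieltjes μ (z + s)‖ ≤ (K - R - b)⁻¹ := by
    have := norm_integral_le_of_norm_le_const (μ := μ)
      (f := fun x : ℝ => ((x : ℂ) - (z + s))⁻¹) hbound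
    simpa [stieltjes, measure_univ] using this
  have hinv : (K - R - b)⁻¹ ≤ 1 / 2 := by
    have := inv_anti₀ two_pos hKRb
    simpa using this
  have : K ≤ ε + (K - R - b)⁻¹ := by
    calc K = ‖s - stieltjes μ (z + s) + stieltjes μ (z + s)‖ := by rw [sub_add_cancel]
      _ ≤ ‖s - stieltjes μ (z + s)‖ + ‖stieltjes μ (z + s)‖ :=
          norm_add_le _ _
      _ ≤ ε + (K - R - b)⁻¹ := add_le_add hclose hm
  linarith
end
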